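/- arXiv:1512.01797 — 8 statements merged into one kernel-verified Lean document; each statement's English description precedes it below -/
import Mathlib

section
/- Assume ⟨·,·⟩_V and ⟨·,·⟩_{V'} are nondegenerate and that every D-linear map V → V' admits an adjoint. Let w ∈ Hom_D(V,V') with adjoint w^⋆. If X ∈ End_D(V) is skew-adjoint (⟨X v₁, v₂⟩_V = −⟨v₁, X v₂⟩_V for all v₁, v₂ ∈ V), then ⟨X·w, w⟩_W = 2·B(X, M(w)), where X·w := −w∘X. If X' ∈ End_D(V') is skew-adjoint for ⟨·,·⟩_{V'}, then ⟨X'·w, w⟩_W = 2·B(X', −M'(w)), where X'·w := X'∘w. -/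
/-- An `ε`-Hermitian form on a `D`-vector space `V`, sesquilinear with respect to the
`F`-algebra involution `τ` of `D`, and `ε`-symmetric. -/
def IsHermForm {F D : Type*} [Field F] [Field D] [Algebra F D]
    (τ : D →ₐ[F] D) (ε : D)
    {V : Type*} [AddCommGroup V] [Module D V] (inn : V → V → D) : Prop :=
  (∀ v₁ v₂ u, inn (v₁ + v₂) u = inn v₁ u + inn v₂ u) ∧
  (∀ v u₁ u₂, inn v (u₁ + u₂) = inn v u₁ + inn v u₂) ∧
  (∀ (a : D) (v u : V), inn (a • v) u = τ a * inn v u) ∧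
  (∀ (a : D) (v u : V), inn v (a • u) = inn v u * a) ∧
  (∀ v u, inn u v = ε * τ (inn v u))

/- `⟨w₁, w₂⟩_W := tr_F(w₁^⋆ ∘ w₂)`: below, the adjoint `w₁^⋆` of `w₁` is any `A` with the
adjoint property (it is unique by nondegeneracy).  `B(X, Y) := (1/2)·tr_F(X ∘ Y)` and the
moment maps are `M(w) = wstar ∘ w`, `M'(w) = w ∘ wstar`. -/
theorem stmt2
    (F : Type*) [Field F] [CharZero F]
    (D : Type*) [Field D] [Algebra F D] [FiniteDimensional F D]
    (τ : D →ₐ[F] D) (hτ : ∀ a, τ (τ a) = a)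
    (ε : D) (hε : ε = 1 ∨ ε = -1)
    (V V' : Type*)
    [AddCommGroup V] [Module D V] [FiniteDimensional D V]
    [AddCommGroup V'] [Module D V'] [FiniteDimensional D V']
    (innV : V → V → D) (innV' : V' → V' → D)
    (hV : IsHermForm τ ε innV)
    (hV' : IsHermForm τ (-ε) innV')
    (hndV : ∀ v : V, (∀ u : V, innV v u = 0) → v = 0)
    (hndV' : ∀ v' : V', (∀ u' : V', innV' v' u' = 0) → v' = 0)
    -- every `D`-linear map `V → V'` admits an adjoint
    (hadj_ex : ∀ T : V →ₗ[D] V', ∃ S : V' →ₗ[D] V,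
      ∀ (v : V) (v' : V'), innV' (T v) v' = innV v (S v'))
    (w : V →ₗ[D] V') (wstar : V' →ₗ[D] V)
    (hw : ∀ (v : V) (v' : V'), innV' (w v) v' = innV v (wstar v')) :
    -- for skew-adjoint `X`: `⟨X·w, w⟩_W = 2·B(X, M(w))`, where `X·w = −w∘X`
    (∀ X : V →ₗ[D] V,
      (∀ v₁ v₂, innV (X v₁) v₂ = - innV v₁ (X v₂)) →
      ∀ A : V' →ₗ[D] V,
        (∀ (v : V) (v' : V'), innV' ((-(w ∘ₗ X)) v) v' = innV v (A v')) →
        Algebra.trace F D (LinearMap.trace D V (A ∘ₗ w))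
          = 2 * ((1 / 2 : F) *
              Algebra.trace F D (LinearMap.trace D V (X ∘ₗ (wstar ∘ₗ w))))) ∧
    -- for skew-adjoint `X'`: `⟨X'·w, w⟩_W = 2·B(X', −M'(w))`, where `X'·w = X'∘w`
    (∀ X' : V' →ₗ[D] V',
      (∀ u₁ u₂, innV' (X' u₁) u₂ = - innV' u₁ (X' u₂)) →
      ∀ A' : V' →ₗ[D] V,
        (∀ (v : V) (v' : V'), innV' ((X' ∘ₗ w) v) v' = innV v (A' v')) →
        Algebra.trace F D (LinearMap.trace D V (A' ∘ₗ w))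
          = 2 * ((1 / 2 : F) *
              Algebra.trace F D (LinearMap.trace D V' (X' ∘ₗ (-(w ∘ₗ wstar)))))) := by
 -- proof
  -- innV is additive & subtractive in second argument
  have hsub : ∀ (u x y : V), innV u (x - y) = innV u x - innV u y := by
    intro u x y
    have h := hV.2.1 u (x - y) y
    rw [sub_add_cancel] at h
    rw [h]; ring
  -- uniqueness of adjoints
  have uniq : ∀ (A B : V' →ₗ[D] V), (∀ (v : V) (v' : V'),
      innV v (A v') = innV v (B v')) → A = B := by
    intro A B h
    ext v'
    have hz : ∀ u : V, innV (A v' - B v') u = 0 := by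
      intro u
      rw [hV.2.2.2.2 u (A v' - B v'), hsub, h, sub_self, map_zero, mul_zero]
    have := hndV _ hz
    exact sub_eq_zero.mp this
  -- negation lemmas
  have hnegV' : ∀ (x : V') (u : V'), innV' (-x) u = - innV' x u := by
    intro x u
    have h := hV'.2.2.1 (-1 : D) x u
    rw [neg_one_smul] at h
    rw [h, map_neg, map_one, neg_one_mul]
  have hnegV : ∀ (v : V) (x : V), innV v (-x) = - innV v x := by
    intro v x
    have h := hV.2.2.2.1 (-1 : D) v x
    rw [neg_one_smul] at h
    rw [h, mul_neg_one]
  constructor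
  · intro X hX A hA
    have hAeq : A = X ∘ₗ wstar := by
      apply uniq
      intro v v'
      have h1 := hA v v'
      have : innV' ((-(w ∘ₗ X)) v) v' = innV v (X (wstar v')) := by
        have : ((-(w ∘ₗ X)) v) = -(w (X v)) := rfl
        rw [this, hnegV', hw, hX, neg_neg]
      rw [← h1, this]; rfl
    rw [hAeq]
    have ht : (X ∘ₗ wstar) ∘ₗ w = X ∘ₗ (wstar ∘ₗ w) := by
      rw [LinearMap.comp_assoc]
    rw [ht]
    have h2 : (2 : F) ≠ 0 := two_ne_zero
    field_simp
  · intro X' hX' A' hA'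
    have hAeq : A' = -(wstar ∘ₗ X') := by
      apply uniq
      intro v v'
      have h1 := hA' v v'
      have h2 : innV' ((X' ∘ₗ w) v) v' = innV v ((-(wstar ∘ₗ X')) v') := by
        have e1 : ((X' ∘ₗ w) v) = X' (w v) := rfl
        rw [e1, hX', hw]
        have e2 : ((-(wstar ∘ₗ X')) v') = -(wstar (X' v')) := rfl
        rw [e2, hnegV]
      rw [← h1, h2]
    rw [hAeq]
    have ht : (-(wstar ∘ₗ X')) ∘ₗ w = -(wstar ∘ₗ (X' ∘ₗ w)) := by
      ext v; simp [LinearMap.comp_assoc]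
    rw [ht, map_neg, map_neg]
    have hcomm : LinearMap.trace D V (wstar ∘ₗ (X' ∘ₗ w))
        = LinearMap.trace D V' ((X' ∘ₗ w) ∘ₗ wstar) := by
      rw [LinearMap.trace_comp_comm']
    have ht2 : X' ∘ₗ (-(w ∘ₗ wstar)) = -((X' ∘ₗ w) ∘ₗ wstar) := by
      ext v'; simp [LinearMap.comp_assoc]
    rw [hcomm, ht2, map_neg, map_neg]
    have h2 : (2 : F) ≠ 0 := two_ne_zero
    field_simp
end

section
/- Assume ⟨·,·⟩_V and ⟨·,·⟩_{V'} are nondegenerate and that every D-linear map between V and V' (in either direction) admits an adjoint. Then the pairing ⟨w₁,w₂⟩_W = tr_F(w₁^⋆ ∘ w₂) on W := Hom_D(V,V') is F-bilinear, antisymmetric (⟨w₂,w₁⟩_W = −⟨w₁,w₂⟩_W for all w₁, w₂ ∈ W), and nondegenerate; in particular W is naturally a symplectic F-vector space. -/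
/-- The field trace is invariant under an `F`-algebra involution. -/
lemma tau_trace_eq (F D : Type*) [Field F] [Field D] [Algebra F D]
    [FiniteDimensional F D] (τ : D →ₐ[F] D) (hτ : ∀ a, τ (τ a) = a) (x : D) :
    Algebra.trace F D (τ x) = Algebra.trace F D x := by
  have hτid : τ.toLinearMap ∘ₗ τ.toLinearMap = LinearMap.id := by
    ext a; simp [hτ]
  have hm : (Algebra.lmul F D (τ x) : D →ₗ[F] D)
      = τ.toLinearMap ∘ₗ (Algebra.lmul F D x : D →ₗ[F] D) ∘ₗ τ.toLinearMap := by
    ext a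
    simp [hτ]
  rw [Algebra.trace_apply, Algebra.trace_apply, hm, LinearMap.trace_comp_comm',
    LinearMap.comp_assoc, hτid, LinearMap.comp_id]

open Matrix in
/-- The `D`-trace of the adjoint of an endomorphism (with respect to a
nondegenerate hermitian form) is `τ` of the trace. -/
lemma trace_adjoint_eq {F D : Type*} [Field F] [Field D] [Algebra F D]
    (τ : D →ₐ[F] D) (ε : D)
    {V : Type*} [AddCommGroup V] [Module D V] [FiniteDimensional D V]
    (innV : V → V → D) (hV : IsHermForm τ ε innV)
    (hnd : ∀ v : V, (∀ u : V, innV v u = 0) → v = 0)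
    (S T : V →ₗ[D] V) (h : ∀ u v, innV (S u) v = innV u (T v)) :
    LinearMap.trace D V T = τ (LinearMap.trace D V S) := by
  classical
  obtain ⟨hadd₁, hadd₂, hsl, hsr, hsym⟩ := hV
  set ψ : V → V →ₗ[D] D := fun v =>
    { toFun := innV v
      map_add' := hadd₂ v
      map_smul' := fun a u => by
        simp only [RingHom.id_apply, smul_eq_mul]
        rw [hsr]; ring } with hψ
  have hψa : ∀ v u, ψ v u = innV v u := fun _ _ => rfl
  have hright : ∀ {ι : Type} [Fintype ι] (c : ι → D) (b : ι → V) (v : V),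
      innV v (∑ i, c i • b i) = ∑ i, innV v (b i) * c i := by
    intro ι _ c b v
    rw [← hψa v, map_sum]
    refine Finset.sum_congr rfl fun i _ => ?_
    rw [_root_.map_smul, smul_eq_mul, hψa, mul_comm]
  have hleft : ∀ {ι : Type} [Fintype ι] (c : ι → D) (b : ι → V) (u : V),
      innV (∑ i, c i • b i) u = ∑ i, innV (b i) u * τ (c i) := by
    intro ι _ c b u
    have h1 : innV u (∑ i, c i • b i) = ∑ i, c i * innV u (b i) := by
      rw [← hψa u, map_sum]
      refine Finset.sum_congr rfl fun i _ => ?_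
      rw [_root_.map_smul, smul_eq_mul, hψa]
    rw [hsym u, h1, map_sum, Finset.mul_sum]
    refine Finset.sum_congr rfl fun i _ => ?_
    rw [_root_.map_mul, hsym u (b i)]
    ring
  set ι := Fin (Module.finrank D V) with hι
  set b : Module.Basis ι D V := Module.finBasis D V with hb
  set G : Matrix ι ι D := Matrix.of fun i j => innV (b i) (b j) with hG
  set M : Matrix ι ι D := LinearMap.toMatrix b b S with hM
  set N : Matrix ι ι D := LinearMap.toMatrix b b T with hN
  have hbS : ∀ j, S (b j) = ∑ i, M i j • b i := by
    intro j
    simp only [hM, LinearMap.toMatrix_apply]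
    exact (b.sum_repr (S (b j))).symm
  have hbT : ∀ j, T (b j) = ∑ i, N i j • b i := by
    intro j
    simp only [hN, LinearMap.toMatrix_apply]
    exact (b.sum_repr (T (b j))).symm
  have key : (M.map τ)ᵀ * G = G * N := by
    ext j k
    have e1 : innV (S (b j)) (b k) = ∑ i, τ (M i j) * G i k := by
      rw [hbS j, hleft]
      refine Finset.sum_congr rfl fun i _ => ?_
      rw [mul_comm]
      rfl
    have e2 : innV (b j) (T (b k)) = ∑ i, G j i * N i k := by
      rw [hbT k, hright]
      rfl
    rw [Matrix.mul_apply, Matrix.mul_apply, ← e2, ← h, e1]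
    refine Finset.sum_congr rfl fun i _ => ?_
    simp [Matrix.transpose_apply, Matrix.map_apply]
  have hdet : IsUnit G.det := by
    rw [isUnit_iff_ne_zero]
    intro hd
    obtain ⟨c, hc0, hcv⟩ := (Matrix.exists_mulVec_eq_zero_iff).mpr hd
    set u : V := ∑ j, c j • b j with hu
    have h0 : ∀ i, innV (b i) u = 0 := by
      intro i
      have h1 : innV (b i) u = ∑ j, G i j * c j := by
        rw [hu, hright]
        refine Finset.sum_congr rfl fun j _ => rfl
      rw [h1]
      have := congrFun hcv i
      simpa [Matrix.mulVec, dotProduct] using this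
    have hψu : ψ u = 0 := by
      apply b.ext
      intro i
      have : innV u (b i) = 0 := by
        rw [hsym (b i) u, h0 i, map_zero, mul_zero]
      simpa [hψa] using this
    have hu0 : u = 0 := by
      apply hnd
      intro w
      have := DFunLike.congr_fun hψu w
      simpa [hψa] using this
    have := Fintype.linearIndependent_iff.mp b.linearIndependent c (by rw [← hu, hu0])
    exact hc0 (funext this)
  have : Invertible G := G.invertibleOfIsUnitDet hdet
  have hNe : N = ⅟G * ((M.map τ)ᵀ * G) := by
    rw [key, ← Matrix.mul_assoc, invOf_mul_self, one_mul]
  have htr : Matrix.trace N = Matrix.trace (M.map τ) := by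
    rw [hNe, Matrix.trace_mul_comm, Matrix.mul_assoc, mul_invOf_self,
      mul_one, Matrix.trace_transpose]
  rw [LinearMap.trace_eq_matrix_trace D b T, LinearMap.trace_eq_matrix_trace D b S,
    ← hM, ← hN, htr]
  rw [Matrix.trace, Matrix.trace, map_sum]
  refine Finset.sum_congr rfl fun i _ => ?_
  simp [Matrix.diag, Matrix.map_apply]

theorem stmt3
    (F : Type*) [Field F] [CharZero F]
    (D : Type*) [Field D] [Algebra F D] [FiniteDimensional F D]
    (τ : D →ₐ[F] D) (hτ : ∀ a, τ (τ a) = a)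
    (ε : D) (hε : ε = 1 ∨ ε = -1)
    (V V' : Type*)
    [AddCommGroup V] [Module D V] [FiniteDimensional D V]
    [AddCommGroup V'] [Module D V'] [FiniteDimensional D V']
    (innV : V → V → D) (innV' : V' → V' → D)
    (hV : IsHermForm τ ε innV)
    (hV' : IsHermForm τ (-ε) innV')
    (hndV : ∀ v : V, (∀ u : V, innV v u = 0) → v = 0)
    (hndV' : ∀ v' : V', (∀ u' : V', innV' v' u' = 0) → v' = 0)
    -- every `D`-linear map between `V` and `V'` (in either direction) admits an adjoint
    (hadj_ex₁ : ∀ T : V →ₗ[D] V', ∃ S : V' →ₗ[D] V,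
      ∀ (v : V) (v' : V'), innV' (T v) v' = innV v (S v'))
    (hadj_ex₂ : ∀ S : V' →ₗ[D] V, ∃ T : V →ₗ[D] V',
      ∀ (v' : V') (v : V), innV (S v') v = innV' v' (T v))
    (ωW : (V →ₗ[D] V') → (V →ₗ[D] V') → F)
    (hωW : ∀ (w₁ w₂ : V →ₗ[D] V') (A : V' →ₗ[D] V),
      (∀ (v : V) (v' : V'), innV' (w₁ v) v' = innV v (A v')) →
      ωW w₁ w₂ = Algebra.trace F D (LinearMap.trace D V (A ∘ₗ w₂))) :
    -- `F`-bilinear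
    (∀ w₁ w₁' w₂ : V →ₗ[D] V', ωW (w₁ + w₁') w₂ = ωW w₁ w₂ + ωW w₁' w₂) ∧
    (∀ w₁ w₂ w₂' : V →ₗ[D] V', ωW w₁ (w₂ + w₂') = ωW w₁ w₂ + ωW w₁ w₂') ∧
    (∀ (c : F) (w₁ w₂ : V →ₗ[D] V'), ωW (algebraMap F D c • w₁) w₂ = c * ωW w₁ w₂) ∧
    (∀ (c : F) (w₁ w₂ : V →ₗ[D] V'), ωW w₁ (algebraMap F D c • w₂) = c * ωW w₁ w₂) ∧
    -- antisymmetric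
    (∀ w₁ w₂ : V →ₗ[D] V', ωW w₂ w₁ = - ωW w₁ w₂) ∧
    -- nondegenerate
    (∀ w₁ : V →ₗ[D] V', (∀ w₂ : V →ₗ[D] V', ωW w₁ w₂ = 0) → w₁ = 0) := by
  classical
  have hτε : τ ε = ε := by rcases hε with h | h <;> simp [h]
  have hεε : ε * ε = 1 := by rcases hε with h | h <;> simp [h]
  choose adj hadj using hadj_ex₁
  have ωeq : ∀ w₁ w₂ : V →ₗ[D] V',
      ωW w₁ w₂ = Algebra.trace F D (LinearMap.trace D V (adj w₁ ∘ₗ w₂)) :=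
    fun w₁ w₂ => hωW w₁ w₂ (adj w₁) (hadj w₁)
  have hz0 : ∀ v : V, innV v (0 : V) = 0 := fun v => by
    rw [show (0 : V) = (0 : D) • (0 : V) by simp, hV.2.2.2.1]; ring
  refine ⟨?_, ?_, ?_, ?_, ?_, ?_⟩
  · -- additivity in the first argument
    intro w₁ w₁' w₂
    have hA : ∀ (v : V) (v' : V'),
        innV' ((w₁ + w₁') v) v' = innV v ((adj w₁ + adj w₁') v') := by
      intro v v'
      simp only [LinearMap.add_apply]
      rw [hV'.1, hV.2.1, hadj w₁, hadj w₁']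
    rw [hωW _ w₂ _ hA, ωeq w₁ w₂, ωeq w₁' w₂, LinearMap.add_comp, map_add, map_add]
  · -- additivity in the second argument
    intro w₁ w₂ w₂'
    rw [ωeq w₁ (w₂ + w₂'), ωeq w₁ w₂, ωeq w₁ w₂', LinearMap.comp_add, map_add, map_add]
  · -- scalars in the first argument
    intro c w₁ w₂
    have hA : ∀ (v : V) (v' : V'),
        innV' ((algebraMap F D c • w₁) v) v' = innV v ((algebraMap F D c • adj w₁) v') := by
      intro v v'
      simp only [LinearMap.smul_apply]
      rw [hV'.2.2.1, hV.2.2.2.1, hadj w₁, τ.commutes, mul_comm]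
    rw [hωW _ w₂ _ hA, ωeq w₁ w₂, LinearMap.smul_comp, map_smul, smul_eq_mul,
      ← Algebra.smul_def, map_smul, smul_eq_mul]
  · -- scalars in the second argument
    intro c w₁ w₂
    rw [ωeq w₁ _, ωeq w₁ w₂, LinearMap.comp_smul, map_smul, smul_eq_mul,
      ← Algebra.smul_def, map_smul, smul_eq_mul]
  · -- antisymmetry
    intro w₁ w₂
    rw [ωeq w₂ w₁, ωeq w₁ w₂]
    have hrel : ∀ u v : V, innV ((adj w₁ ∘ₗ w₂) u) v = innV u ((-(adj w₂ ∘ₗ w₁)) v) := by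
      intro u v
      simp only [LinearMap.comp_apply, LinearMap.neg_apply]
      have h1 : innV (adj w₁ (w₂ u)) v = ε * τ (innV v (adj w₁ (w₂ u))) :=
        hV.2.2.2.2 v _
      rw [h1, ← hadj w₁ v (w₂ u)]
      have h2 : innV' (w₁ v) (w₂ u) = -ε * τ (innV' (w₂ u) (w₁ v)) :=
        hV'.2.2.2.2 _ _
      rw [h2, hadj w₂]
      rw [map_mul, map_neg, hτε, hτ]
      have h3 : innV u (-(adj w₂ (w₁ v))) = - innV u (adj w₂ (w₁ v)) := by
        rw [show -(adj w₂ (w₁ v)) = (-1 : D) • (adj w₂ (w₁ v)) by simp, hV.2.2.2.1]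
        ring
      rw [h3]
      linear_combination (-(innV u (adj w₂ (w₁ v)))) * hεε
    have htra := trace_adjoint_eq τ ε innV hV hndV (adj w₁ ∘ₗ w₂) (-(adj w₂ ∘ₗ w₁)) hrel
    rw [map_neg] at htra
    have h3 : LinearMap.trace D V (adj w₂ ∘ₗ w₁)
        = - τ (LinearMap.trace D V (adj w₁ ∘ₗ w₂)) := by
      rw [← htra, neg_neg]
    rw [h3, map_neg, tau_trace_eq F D τ hτ]
  · -- nondegeneracy
    intro w₁ hz
    by_contra hne
    have hA : adj w₁ ≠ 0 := by
      intro h0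
      apply hne
      ext v
      show w₁ v = 0
      apply hndV'
      intro u'
      rw [hadj w₁ v u', h0]
      simpa using hz0 v
    obtain ⟨v', hv'⟩ : ∃ v', adj w₁ v' ≠ 0 := by
      by_contra hall
      push_neg at hall
      exact hA (LinearMap.ext fun v' => by simpa using hall v')
    set u : V := adj w₁ v' with hu
    obtain ⟨f, hf⟩ : ∃ f : Module.Dual D V, f u ≠ 0 := by
      by_contra hall
      push_neg at hall
      exact hv' ((Module.forall_dual_apply_eq_zero_iff D u).mp hall)
    set g : Module.Dual D V := (f u)⁻¹ • f with hg
    have hgu : g u = 1 := by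
      simp only [hg, LinearMap.smul_apply, smul_eq_mul]
      exact inv_mul_cancel₀ hf
    set w₂ : V →ₗ[D] V' := g.smulRight v' with hw₂
    have hcomp : adj w₁ ∘ₗ w₂ = g.smulRight u := by
      ext v
      simp [hw₂, hu]
    have htr : LinearMap.trace D V (g.smulRight u) = g u := by
      have h1 : g.smulRight u = dualTensorHom D V V (g ⊗ₜ u) := by
        ext v; simp
      rw [h1, LinearMap.trace_eq_contract_apply, contractLeft_apply]
    have hcontr := hz w₂
    rw [ωeq w₁ w₂, hcomp, htr, hgu] at hcontr
    have h1 : Algebra.trace F D 1 = (Module.finrank F D : F) := by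
      have := Algebra.trace_algebraMap (R := F) (S := D) (1 : F)
      simpa using this
    rw [h1] at hcontr
    exact (Nat.cast_ne_zero.mpr (Module.finrank_pos (R := F) (M := D)).ne') hcontr
end

section
/- Assume ⟨·,·⟩_V and ⟨·,·⟩_{V'} are nondegenerate and that every D-linear map between V and V' admits an adjoint. Let w ∈ Hom_D(V,V') with adjoint w^⋆, set Γ := w^⋆∘w and Γ' := w∘w^⋆, and define ι(X,X') := −w∘X + X'∘w for X ∈ End_D(V), X' ∈ End_D(V'). Then for all skew-adjoint X₁, X₂ ∈ End_D(V) and all skew-adjoint X'₁, X'₂ ∈ End_D(V'): ⟨ι(X₁,X'₁), ι(X₂,X'₂)⟩_W = B(X₁∘X₂ − X₂∘X₁, Γ) + B(X'₁∘X'₂ − X'₂∘X'₁, −Γ'). In other words, ι is an isometry from g ⊕ g' (equipped with the symplectic forms ⟨X₁,X₂⟩_Γ := B([X₁,X₂],Γ) on g and ⟨X'₁,X'₂⟩_{−Γ'} := B([X'₁,X'₂],−Γ') on g', where g and g' denote the spaces of skew-adjoint endomorphisms of V and V' respectively, and the two summands are mapped to mutually orthogonal subspaces) into (W, ⟨·,·⟩_W).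 -/
open Module

lemma trace_adjoint_aux {F D : Type*} [Field F] [Field D] [Algebra F D] [FiniteDimensional F D]
    (τ : D →ₐ[F] D) (hτ : ∀ a, τ (τ a) = a)
    {V : Type*} [AddCommGroup V] [Module D V] [FiniteDimensional D V]
    (inn : V → V → D)
    (h_add_l : ∀ v₁ v₂ u, inn (v₁ + v₂) u = inn v₁ u + inn v₂ u)
    (h_add_r : ∀ v u₁ u₂, inn v (u₁ + u₂) = inn v u₁ + inn v u₂)
    (h_sl : ∀ (a : D) (v u : V), inn (a • v) u = τ a * inn v u)
    (h_sr : ∀ (a : D) (v u : V), inn v (a • u) = inn v u * a)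
    (hnd2 : ∀ u : V, (∀ v : V, inn v u = 0) → u = 0)
    (T S : V →ₗ[D] V) (hTS : ∀ v u, inn (T v) u = inn v (S u)) :
    Algebra.trace F D (LinearMap.trace D V S) = Algebra.trace F D (LinearMap.trace D V T) := by
  classical
  set n := Fin (finrank D V)
  set b : Basis n D V := finBasis D V with hb
  set AS := LinearMap.toMatrix b b S with hAS
  set AT := LinearMap.toMatrix b b T with hAT
  set M : Matrix n n D := Matrix.of fun i j => inn (b i) (b j) with hM
  have sum_r : ∀ (v : V) (s : Finset n) (f : n → V),
      inn v (∑ i ∈ s, f i) = ∑ i ∈ s, inn v (f i) := fun v s f =>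
    map_sum (AddMonoidHom.mk' (inn v) (h_add_r v)) f s
  have sum_l : ∀ (u : V) (s : Finset n) (f : n → V),
      inn (∑ i ∈ s, f i) u = ∑ i ∈ s, inn (f i) u := fun u s f =>
    map_sum (AddMonoidHom.mk' (fun x => inn x u) (fun a c => h_add_l a c u)) f s
  have claim1 : M * AS = ((AT.map τ).transpose) * M := by
    ext j k
    have h1 : (M * AS) j k = inn (b j) (S (b k)) := by
      rw [Matrix.mul_apply]
      have : ∀ i, M j i * AS i k = inn (b j) (AS i k • b i) := by
        intro i; rw [h_sr]; rfl
      rw [Finset.sum_congr rfl fun i _ => this i, ← sum_r]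
      congr 1
      conv_rhs => rw [← b.sum_repr (S (b k))]
      refine Finset.sum_congr rfl fun i _ => ?_
      rw [hAS, LinearMap.toMatrix_apply]
    have h2 : ((((AT.map τ).transpose)) * M) j k = inn (T (b j)) (b k) := by
      rw [Matrix.mul_apply]
      have : ∀ i, (((AT.map τ).transpose)) j i * M i k = inn (AT i j • b i) (b k) := by
        intro i; rw [h_sl]; rfl
      rw [Finset.sum_congr rfl fun i _ => this i, ← sum_l]
      congr 1
      conv_rhs => rw [← b.sum_repr (T (b j))]
      refine Finset.sum_congr rfl fun i _ => ?_
      rw [hAT, LinearMap.toMatrix_apply]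
    rw [h1, h2, hTS]
  have hdet : M.det ≠ 0 := by
    intro h
    obtain ⟨x, hx0, hMx⟩ := Matrix.exists_mulVec_eq_zero_iff.mpr h
    set u : V := ∑ i, x i • b i with hu
    have hju : ∀ j, inn (b j) u = 0 := by
      intro j
      have h1 : M.mulVec x j = 0 := congrFun hMx j
      rw [Matrix.mulVec, dotProduct] at h1
      rw [hu, sum_r]
      calc ∑ i, inn (b j) (x i • b i) = ∑ i, M j i * x i :=
            Finset.sum_congr rfl fun i _ => by rw [h_sr]; rfl
        _ = 0 := h1
    have hvu : ∀ v, inn v u = 0 := by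
      intro v
      conv_lhs => rw [← b.sum_repr v]
      rw [sum_l]
      refine Finset.sum_eq_zero fun j _ => ?_
      rw [h_sl, hju, mul_zero]
    have hu0 : u = 0 := hnd2 u hvu
    have := Fintype.linearIndependent_iff.mp b.linearIndependent x (by rw [← hu, hu0])
    exact hx0 (funext this)
  have hMu : IsUnit M.det := isUnit_iff_ne_zero.mpr hdet
  have hASeq : AS = M⁻¹ * (((AT.map τ).transpose) * M) := by
    rw [← claim1, ← Matrix.mul_assoc, Matrix.nonsing_inv_mul M hMu, Matrix.one_mul]
  have htr : Matrix.trace AS = τ (Matrix.trace AT) := by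
    rw [hASeq, Matrix.trace_mul_comm, Matrix.mul_assoc, Matrix.mul_nonsing_inv M hMu,
      Matrix.mul_one, Matrix.trace_transpose]
    simp only [Matrix.trace, Matrix.diag_apply, Matrix.map_apply, map_sum]
  have hLS : LinearMap.trace D V S = τ (LinearMap.trace D V T) := by
    rw [LinearMap.trace_eq_matrix_trace D b S, LinearMap.trace_eq_matrix_trace D b T, ← hAS, ← hAT,
      htr]
  rw [hLS]
  exact Algebra.trace_eq_of_algEquiv (AlgEquiv.ofAlgHom τ τ (by ext x; exact hτ x)
    (by ext x; exact hτ x)) (LinearMap.trace D V T)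

/- `ι(X, X') = −w∘X + X'∘w`; `⟨w₁, w₂⟩_W = tr_F(w₁^⋆ ∘ w₂)` where `w₁^⋆` is the (unique)
adjoint `A` of `w₁`; `B(X, Y) = (1/2)·tr_F(X∘Y)`; `Γ = wstar∘w`, `Γ' = w∘wstar`. -/
theorem stmt4
    (F : Type*) [Field F] [CharZero F]
    (D : Type*) [Field D] [Algebra F D] [FiniteDimensional F D]
    (τ : D →ₐ[F] D) (hτ : ∀ a, τ (τ a) = a)
    (ε : D) (hε : ε = 1 ∨ ε = -1)
    (V V' : Type*)
    [AddCommGroup V] [Module D V] [FiniteDimensional D V]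
    [AddCommGroup V'] [Module D V'] [FiniteDimensional D V']
    (innV : V → V → D) (innV' : V' → V' → D)
    (hV : IsHermForm τ ε innV)
    (hV' : IsHermForm τ (-ε) innV')
    (hndV : ∀ v : V, (∀ u : V, innV v u = 0) → v = 0)
    (hndV' : ∀ v' : V', (∀ u' : V', innV' v' u' = 0) → v' = 0)
    -- every `D`-linear map between `V` and `V'` admits an adjoint
    (hadj_ex₁ : ∀ T : V →ₗ[D] V', ∃ S : V' →ₗ[D] V,
      ∀ (v : V) (v' : V'), innV' (T v) v' = innV v (S v'))
    (hadj_ex₂ : ∀ S : V' →ₗ[D] V, ∃ T : V →ₗ[D] V',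
      ∀ (v' : V') (v : V), innV (S v') v = innV' v' (T v))
    (w : V →ₗ[D] V') (wstar : V' →ₗ[D] V)
    (hw : ∀ (v : V) (v' : V'), innV' (w v) v' = innV v (wstar v')) :
    ∀ (X₁ X₂ : V →ₗ[D] V) (X'₁ X'₂ : V' →ₗ[D] V'),
      (∀ v u, innV (X₁ v) u = - innV v (X₁ u)) →
      (∀ v u, innV (X₂ v) u = - innV v (X₂ u)) →
      (∀ u u', innV' (X'₁ u) u' = - innV' u (X'₁ u')) →
      (∀ u u', innV' (X'₂ u) u' = - innV' u (X'₂ u')) →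
      ∀ A : V' →ₗ[D] V,
        -- `A` is the adjoint of `ι(X₁, X'₁) = −w∘X₁ + X'₁∘w`
        (∀ (v : V) (v' : V'), innV' ((-(w ∘ₗ X₁) + X'₁ ∘ₗ w) v) v' = innV v (A v')) →
        -- `⟨ι(X₁,X'₁), ι(X₂,X'₂)⟩_W = B([X₁,X₂], Γ) + B([X'₁,X'₂], −Γ')`
        Algebra.trace F D (LinearMap.trace D V (A ∘ₗ (-(w ∘ₗ X₂) + X'₂ ∘ₗ w)))
          = (1 / 2 : F) * Algebra.trace F D
              (LinearMap.trace D V ((X₁ ∘ₗ X₂ - X₂ ∘ₗ X₁) ∘ₗ (wstar ∘ₗ w)))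
            + (1 / 2 : F) * Algebra.trace F D
              (LinearMap.trace D V' ((X'₁ ∘ₗ X'₂ - X'₂ ∘ₗ X'₁) ∘ₗ (-(w ∘ₗ wstar)))) := by
  obtain ⟨hVal, hVar, hVsl, hVsr, hVsym⟩ := hV
  obtain ⟨hV'al, hV'ar, hV'sl, hV'sr, hV'sym⟩ := hV'
  intro X₁ X₂ X'₁ X'₂ hX₁ hX₂ hX'₁ hX'₂ A hA
  have hεε : ε * ε = 1 := by rcases hε with h | h <;> simp [h]
  have hτε : τ ε = ε := by rcases hε with h | h <;> simp [h]
  have hVnegr : ∀ (v y : V), innV v (-y) = - innV v y := by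
    intro v y
    rw [← neg_one_smul D y, hVsr]; ring
  have hV'negr : ∀ (v y : V'), innV' v (-y) = - innV' v y := by
    intro v y
    rw [← neg_one_smul D y, hV'sr]; ring
  have hV'negl : ∀ (y u' : V'), innV' (-y) u' = - innV' y u' := by
    intro y u'
    rw [← neg_one_smul D y, hV'sl, map_neg, map_one]; ring
  have hnd2V : ∀ u : V, (∀ v, innV v u = 0) → u = 0 := by
    intro u h
    refine hndV u fun v => ?_
    rw [hVsym, h, map_zero, mul_zero]
  have hnd2V' : ∀ u : V', (∀ v, innV' v u = 0) → u = 0 := by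
    intro u h
    refine hndV' u fun v => ?_
    rw [hV'sym, h, map_zero, mul_zero]
  have hw' : ∀ (v' : V') (v : V), innV (wstar v') v = - innV' v' (w v) := by
    intro v' v
    rw [hVsym, ← hw, hV'sym, map_mul, map_neg, hτε, hτ]
    linear_combination (-(innV' v' (w v))) * hεε
  -- adjoint wrappers
  have adjV : ∀ T S : V →ₗ[D] V, (∀ v u, innV (T v) u = innV v (S u)) →
      Algebra.trace F D (LinearMap.trace D V S) = Algebra.trace F D (LinearMap.trace D V T) :=
    fun T S h => trace_adjoint_aux τ hτ innV hVal hVar hVsl hVsr hnd2V T S h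
  have adjV' : ∀ T S : V' →ₗ[D] V', (∀ v u, innV' (T v) u = innV' v (S u)) →
      Algebra.trace F D (LinearMap.trace D V' S) = Algebra.trace F D (LinearMap.trace D V' T) :=
    fun T S h => trace_adjoint_aux τ hτ innV' hV'al hV'ar hV'sl hV'sr hnd2V' T S h
  -- A is determined
  have hA' : A = X₁ ∘ₗ wstar - wstar ∘ₗ X'₁ := by
    refine LinearMap.ext fun v' => ?_
    have key : ∀ v, innV v (A v' - (X₁ ∘ₗ wstar - wstar ∘ₗ X'₁) v') = 0 := by
      intro v
      have h0 := hA v v'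
      simp only [LinearMap.add_apply, LinearMap.neg_apply, LinearMap.comp_apply] at h0
      rw [hV'al, hV'negl, hw, hX₁, hX'₁, hw] at h0
      have hsplit : innV v (A v' - (X₁ ∘ₗ wstar - wstar ∘ₗ X'₁) v')
          = innV v (A v') - (innV v (X₁ (wstar v')) - innV v (wstar (X'₁ v'))) := by
        rw [show (X₁ ∘ₗ wstar - wstar ∘ₗ X'₁) v' = X₁ (wstar v') - wstar (X'₁ v') from rfl,
          sub_eq_add_neg, hVar, hVnegr, sub_eq_add_neg (X₁ (wstar v')), hVar, hVnegr]
        ring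
      rw [hsplit]
      linear_combination -h0
    have h1 := hnd2V _ (key)
    exact sub_eq_zero.mp h1
  rw [hA']
  -- expansions
  have E1 : (X₁ ∘ₗ wstar - wstar ∘ₗ X'₁) ∘ₗ (-(w ∘ₗ X₂) + X'₂ ∘ₗ w)
      = -(X₁ ∘ₗ (wstar ∘ₗ (w ∘ₗ X₂))) + X₁ ∘ₗ (wstar ∘ₗ (X'₂ ∘ₗ w))
        + wstar ∘ₗ (X'₁ ∘ₗ (w ∘ₗ X₂)) - wstar ∘ₗ (X'₁ ∘ₗ (X'₂ ∘ₗ w)) := by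
    ext v
    simp only [LinearMap.sub_apply, LinearMap.add_apply, LinearMap.neg_apply,
      LinearMap.comp_apply, map_add, map_neg, map_sub]
    abel
  have E2 : (X₁ ∘ₗ X₂ - X₂ ∘ₗ X₁) ∘ₗ (wstar ∘ₗ w)
      = X₁ ∘ₗ (X₂ ∘ₗ (wstar ∘ₗ w)) - X₂ ∘ₗ (X₁ ∘ₗ (wstar ∘ₗ w)) := by
    ext v
    simp only [LinearMap.sub_apply, LinearMap.comp_apply, map_sub]
  have E3 : (X'₁ ∘ₗ X'₂ - X'₂ ∘ₗ X'₁) ∘ₗ (-(w ∘ₗ wstar))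
      = -(X'₁ ∘ₗ (X'₂ ∘ₗ (w ∘ₗ wstar))) + X'₂ ∘ₗ (X'₁ ∘ₗ (w ∘ₗ wstar)) := by
    ext v
    simp only [LinearMap.sub_apply, LinearMap.add_apply, LinearMap.neg_apply,
      LinearMap.comp_apply, map_neg, map_sub]
    abel
  rw [E1, E2, E3]
  simp only [map_add, map_sub, map_neg]
  -- cyclic identities
  have A1 : Algebra.trace F D (LinearMap.trace D V (X₁ ∘ₗ (wstar ∘ₗ (w ∘ₗ X₂))))
      = Algebra.trace F D (LinearMap.trace D V (X₂ ∘ₗ (X₁ ∘ₗ (wstar ∘ₗ w)))) := by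
    congr 1
    have h := LinearMap.trace_comp_comm' (R := D) X₂ (X₁ ∘ₗ (wstar ∘ₗ w))
    rw [show X₁ ∘ₗ (wstar ∘ₗ (w ∘ₗ X₂)) = (X₁ ∘ₗ (wstar ∘ₗ w)) ∘ₗ X₂ from rfl]
    exact h
  have A2 : Algebra.trace F D (LinearMap.trace D V (X₂ ∘ₗ (X₁ ∘ₗ (wstar ∘ₗ w))))
      = - Algebra.trace F D (LinearMap.trace D V (X₁ ∘ₗ (X₂ ∘ₗ (wstar ∘ₗ w)))) := by
    have hadj := adjV (X₂ ∘ₗ (X₁ ∘ₗ (wstar ∘ₗ w))) (-(wstar ∘ₗ (w ∘ₗ (X₁ ∘ₗ X₂)))) ?_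
    · have hcyc : Algebra.trace F D (LinearMap.trace D V (wstar ∘ₗ (w ∘ₗ (X₁ ∘ₗ X₂))))
          = Algebra.trace F D (LinearMap.trace D V (X₁ ∘ₗ (X₂ ∘ₗ (wstar ∘ₗ w)))) := by
        congr 1
        have h := LinearMap.trace_comp_comm' (R := D) (X₁ ∘ₗ X₂) (wstar ∘ₗ w)
        rw [show wstar ∘ₗ (w ∘ₗ (X₁ ∘ₗ X₂)) = (wstar ∘ₗ w) ∘ₗ (X₁ ∘ₗ X₂) from rfl,
          show X₁ ∘ₗ (X₂ ∘ₗ (wstar ∘ₗ w)) = (X₁ ∘ₗ X₂) ∘ₗ (wstar ∘ₗ w) from rfl]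
        exact h
      rw [map_neg, map_neg, hcyc] at hadj
      linear_combination -hadj
    · intro v u
      simp only [LinearMap.comp_apply, LinearMap.neg_apply]
      rw [hX₂, hX₁, hw', hw, hVnegr]
      ring
  have A3 : Algebra.trace F D (LinearMap.trace D V (X₁ ∘ₗ (wstar ∘ₗ (X'₂ ∘ₗ w)))) = 0 := by
    have hadj := adjV (X₁ ∘ₗ (wstar ∘ₗ (X'₂ ∘ₗ w))) (-(wstar ∘ₗ (X'₂ ∘ₗ (w ∘ₗ X₁)))) ?_
    · have hcyc : Algebra.trace F D (LinearMap.trace D V (wstar ∘ₗ (X'₂ ∘ₗ (w ∘ₗ X₁))))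
          = Algebra.trace F D (LinearMap.trace D V (X₁ ∘ₗ (wstar ∘ₗ (X'₂ ∘ₗ w)))) := by
        congr 1
        have h := LinearMap.trace_comp_comm' (R := D) X₁ (wstar ∘ₗ (X'₂ ∘ₗ w))
        rw [show wstar ∘ₗ (X'₂ ∘ₗ (w ∘ₗ X₁)) = (wstar ∘ₗ (X'₂ ∘ₗ w)) ∘ₗ X₁ from rfl]
        exact h
      rw [map_neg, map_neg, hcyc] at hadj
      have h2 : (2 : F) * Algebra.trace F D
          (LinearMap.trace D V (X₁ ∘ₗ (wstar ∘ₗ (X'₂ ∘ₗ w)))) = 0 := by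
        linear_combination -hadj
      exact (mul_eq_zero.mp h2).resolve_left two_ne_zero
    · intro v u
      simp only [LinearMap.comp_apply, LinearMap.neg_apply]
      rw [hX₁, hw', hX'₂, hw, hVnegr]
      ring
  have A4 : Algebra.trace F D (LinearMap.trace D V (wstar ∘ₗ (X'₁ ∘ₗ (w ∘ₗ X₂)))) = 0 := by
    have hadj := adjV (wstar ∘ₗ (X'₁ ∘ₗ (w ∘ₗ X₂))) (-(X₂ ∘ₗ (wstar ∘ₗ (X'₁ ∘ₗ w)))) ?_
    · have hcyc : Algebra.trace F D (LinearMap.trace D V (X₂ ∘ₗ (wstar ∘ₗ (X'₁ ∘ₗ w))))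
          = Algebra.trace F D (LinearMap.trace D V (wstar ∘ₗ (X'₁ ∘ₗ (w ∘ₗ X₂)))) := by
        congr 1
        have h := LinearMap.trace_comp_comm' (R := D) X₂ (wstar ∘ₗ (X'₁ ∘ₗ w))
        rw [show wstar ∘ₗ (X'₁ ∘ₗ (w ∘ₗ X₂)) = (wstar ∘ₗ (X'₁ ∘ₗ w)) ∘ₗ X₂ from rfl]
        exact h.symm
      rw [map_neg, map_neg, hcyc] at hadj
      have h2 : (2 : F) * Algebra.trace F D
          (LinearMap.trace D V (wstar ∘ₗ (X'₁ ∘ₗ (w ∘ₗ X₂)))) = 0 := by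
        linear_combination -hadj
      exact (mul_eq_zero.mp h2).resolve_left two_ne_zero
    · intro v u
      simp only [LinearMap.comp_apply, LinearMap.neg_apply]
      rw [hw', hX'₁, hw, hX₂, hVnegr]
      ring
  have A5 : Algebra.trace F D (LinearMap.trace D V (wstar ∘ₗ (X'₁ ∘ₗ (X'₂ ∘ₗ w))))
      = Algebra.trace F D (LinearMap.trace D V' (X'₁ ∘ₗ (X'₂ ∘ₗ (w ∘ₗ wstar)))) := by
    congr 1
    have h := LinearMap.trace_comp_comm' (R := D) (X'₁ ∘ₗ (X'₂ ∘ₗ w)) wstar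
    rw [show X'₁ ∘ₗ (X'₂ ∘ₗ (w ∘ₗ wstar)) = (X'₁ ∘ₗ (X'₂ ∘ₗ w)) ∘ₗ wstar from rfl]
    exact h
  have A6 : Algebra.trace F D (LinearMap.trace D V' (X'₂ ∘ₗ (X'₁ ∘ₗ (w ∘ₗ wstar))))
      = - Algebra.trace F D (LinearMap.trace D V' (X'₁ ∘ₗ (X'₂ ∘ₗ (w ∘ₗ wstar)))) := by
    have hadj := adjV' (X'₂ ∘ₗ (X'₁ ∘ₗ (w ∘ₗ wstar))) (-(w ∘ₗ (wstar ∘ₗ (X'₁ ∘ₗ X'₂)))) ?_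
    · have hcyc : Algebra.trace F D (LinearMap.trace D V' (w ∘ₗ (wstar ∘ₗ (X'₁ ∘ₗ X'₂))))
          = Algebra.trace F D (LinearMap.trace D V' (X'₁ ∘ₗ (X'₂ ∘ₗ (w ∘ₗ wstar)))) := by
        congr 1
        have h := LinearMap.trace_comp_comm' (R := D) (wstar ∘ₗ (X'₁ ∘ₗ X'₂)) w
        rw [show w ∘ₗ (wstar ∘ₗ (X'₁ ∘ₗ X'₂)) = w ∘ₗ (wstar ∘ₗ (X'₁ ∘ₗ X'₂)) from rfl]
        have h2 := LinearMap.trace_comp_comm' (R := D) w (wstar ∘ₗ (X'₁ ∘ₗ X'₂))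
        rw [show (X'₁ ∘ₗ (X'₂ ∘ₗ (w ∘ₗ wstar))) = (X'₁ ∘ₗ X'₂) ∘ₗ (w ∘ₗ wstar) from rfl]
        calc LinearMap.trace D V' (w ∘ₗ (wstar ∘ₗ (X'₁ ∘ₗ X'₂)))
            = LinearMap.trace D V ((wstar ∘ₗ (X'₁ ∘ₗ X'₂)) ∘ₗ w) :=
              (LinearMap.trace_comp_comm' (R := D) w (wstar ∘ₗ (X'₁ ∘ₗ X'₂))).symm
          _ = LinearMap.trace D V' ((X'₁ ∘ₗ X'₂) ∘ₗ (w ∘ₗ wstar)) := by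
              have h3 := LinearMap.trace_comp_comm' (R := D) ((X'₁ ∘ₗ X'₂) ∘ₗ w) wstar
              rw [show (wstar ∘ₗ (X'₁ ∘ₗ X'₂)) ∘ₗ w = wstar ∘ₗ ((X'₁ ∘ₗ X'₂) ∘ₗ w) from rfl,
                show (X'₁ ∘ₗ X'₂) ∘ₗ (w ∘ₗ wstar) = ((X'₁ ∘ₗ X'₂) ∘ₗ w) ∘ₗ wstar from rfl]
              exact h3
      rw [map_neg, map_neg, hcyc] at hadj
      linear_combination -hadj
    · intro v u
      simp only [LinearMap.comp_apply, LinearMap.neg_apply]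
      rw [hX'₂, hX'₁, hw, hw', hV'negr]
      ring
  linear_combination (-1 : F) * A1 - (1/2 : F) * A2 + A3 + A4 - A5 - (1/2 : F) * A6
end

section
/- Assume 2 is invertible in D and ⟨·,·⟩_V is nondegenerate (so adjoints are unique when they exist). Let w : V → V' be a bijective D-linear map admitting a bijective adjoint w^⋆, and set Γ := w^⋆∘w. For X ∈ End_D(V) admitting an adjoint X^*, define dα(X) := (1/2)·(w∘X∘w⁻¹ − (w^⋆)⁻¹∘X^*∘w^⋆) ∈ End_D(V'). Let Γ_i ∈ End_D(V) be skew-adjoint (its adjoint is −Γ_i) and commute with Γ, and set Γ'_i := w∘Γ_i∘w⁻¹. Then dα intertwines the adjoint actions of Γ_i and Γ'_i: for every X ∈ End_D(V) with adjoint X^*, the commutator [Γ_i, X] := Γ_i∘X − X∘Γ_i has adjoint [Γ_i, X^*], and dα([Γ_i, X]) = Γ'_i∘dα(X) − dα(X)∘Γ'_i. -/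
/-- An `ε`-Hermitian form on a right `D`-module `V` (encoded as a left `Dᵐᵒᵖ`-module). -/
def IsHermitianForm {D : Type*} [DivisionRing D] (τ : D → D) (ε : D)
    {V : Type*} [AddCommGroup V] [Module Dᵐᵒᵖ V] (inn : V → V → D) : Prop :=
  (∀ v₁ v₂ u, inn (v₁ + v₂) u = inn v₁ u + inn v₂ u) ∧
  (∀ v u₁ u₂, inn v (u₁ + u₂) = inn v u₁ + inn v u₂) ∧
  (∀ (a : D) (v u : V), inn (MulOpposite.op a • v) u = τ a * inn v u) ∧
  (∀ (a : D) (v u : V), inn v (MulOpposite.op a • u) = inn v u * a) ∧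
  (∀ v u, inn u v = ε * τ (inn v u))

/- `dα(X) := (1/2)·(w∘X∘w⁻¹ − (w^⋆)⁻¹∘X^*∘w^⋆)`; since `2` is invertible, `dα(X)` is
characterized as the unique `Y` with `Y + Y = w∘X∘w⁻¹ − (w^⋆)⁻¹∘X^*∘w^⋆`, which is the
way it is given below. -/
theorem stmt7
    (D : Type*) [DivisionRing D]
    (τ : D → D)
    (hτadd : ∀ a b, τ (a + b) = τ a + τ b)
    (hτmul : ∀ a b, τ (a * b) = τ b * τ a)
    (hτinv : ∀ a, τ (τ a) = a)
    (ε : D) (hε : ε = 1 ∨ ε = -1)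
    (h2 : IsUnit (2 : D))
    (V V' : Type*) [AddCommGroup V] [AddCommGroup V']
    [Module Dᵐᵒᵖ V] [Module Dᵐᵒᵖ V']
    (innV : V → V → D) (innV' : V' → V' → D)
    (hV : IsHermitianForm τ ε innV)
    (hV' : IsHermitianForm τ (-ε) innV')
    (hnd : ∀ v : V, (∀ u : V, innV v u = 0) → v = 0)
    -- `w` is a bijective `D`-linear map with bijective adjoint `wstar`; `Γ := wstar ∘ w`
    (w : V ≃ₗ[Dᵐᵒᵖ] V') (wstar : V' ≃ₗ[Dᵐᵒᵖ] V)
    (hadj : ∀ (v : V) (v' : V'), innV' (w v) v' = innV v (wstar v'))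
    -- `Γi` is skew-adjoint (its adjoint is `-Γi`) and commutes with `Γ`; `Γ'i := w∘Γi∘w⁻¹`
    (Γi : V →ₗ[Dᵐᵒᵖ] V)
    (hΓiskew : ∀ (v u : V), innV (Γi v) u = innV v ((-Γi) u))
    (hΓicomm : Γi ∘ₗ (wstar.toLinearMap ∘ₗ w.toLinearMap)
        = (wstar.toLinearMap ∘ₗ w.toLinearMap) ∘ₗ Γi)
    (X Xstar : V →ₗ[Dᵐᵒᵖ] V)
    (hX : ∀ (v u : V), innV (X v) u = innV v (Xstar u))
    -- `dαX = dα(X)` and `dαY = dα([Γi, X])`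
    (dαX dαY : V' →ₗ[Dᵐᵒᵖ] V')
    (hdαX : dαX + dαX
        = w.toLinearMap ∘ₗ X ∘ₗ w.symm.toLinearMap
          - wstar.symm.toLinearMap ∘ₗ Xstar ∘ₗ wstar.toLinearMap)
    (hdαY : dαY + dαY
        = w.toLinearMap ∘ₗ (Γi ∘ₗ X - X ∘ₗ Γi) ∘ₗ w.symm.toLinearMap
          - wstar.symm.toLinearMap ∘ₗ (Γi ∘ₗ Xstar - Xstar ∘ₗ Γi) ∘ₗ wstar.toLinearMap) :
    -- `[Γi, X]` has adjoint `[Γi, Xstar]`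
    (∀ (v u : V), innV ((Γi ∘ₗ X - X ∘ₗ Γi) v) u = innV v ((Γi ∘ₗ Xstar - Xstar ∘ₗ Γi) u)) ∧
    -- `dα([Γi, X]) = Γ'i ∘ dα(X) − dα(X) ∘ Γ'i`
    dαY = (w.toLinearMap ∘ₗ Γi ∘ₗ w.symm.toLinearMap) ∘ₗ dαX
        - dαX ∘ₗ (w.toLinearMap ∘ₗ Γi ∘ₗ w.symm.toLinearMap) := by
  obtain ⟨h1, h2', h3, h4, h5⟩ := hV
  have hsub₁ : ∀ (a b u : V), innV (a - b) u = innV a u - innV b u := fun a b u =>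
    map_sub (AddMonoidHom.mk' (fun x => innV x u) (fun x y => h1 x y u)) a b
  have hsub₂ : ∀ (v a b : V), innV v (a - b) = innV v a - innV v b := fun v a b =>
    map_sub (AddMonoidHom.mk' (innV v) (h2' v)) a b
  have hneg₂ : ∀ (v a : V), innV v (-a) = - innV v a := fun v a =>
    map_neg (AddMonoidHom.mk' (innV v) (h2' v)) a
  constructor
  · intro v u
    simp only [LinearMap.sub_apply, LinearMap.comp_apply]
    rw [hsub₁, hsub₂, hΓiskew (X v) u, hX v, hX (Γi v) u, hΓiskew v (Xstar u)]
    simp only [LinearMap.neg_apply, map_neg, hneg₂]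
    abel
  · have cancel : ∀ x y : V', x + x = y + y → x = y := by
      intro x y h
      have h2n : (2 : Dᵐᵒᵖ) ≠ 0 := by
        intro hc
        have : (2 : D) ≠ 0 := h2.ne_zero
        apply this
        have : MulOpposite.unop (2 : Dᵐᵒᵖ) = MulOpposite.unop (0 : Dᵐᵒᵖ) := by rw [hc]
        simpa using this
      have hh : (2 : Dᵐᵒᵖ) • x = (2 : Dᵐᵒᵖ) • y := by
        rw [two_smul, two_smul]; exact h
      calc x = (2 : Dᵐᵒᵖ)⁻¹ • ((2 : Dᵐᵒᵖ) • x) := (inv_smul_smul₀ h2n x).symm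
        _ = (2 : Dᵐᵒᵖ)⁻¹ • ((2 : Dᵐᵒᵖ) • y) := by rw [hh]
        _ = y := inv_smul_smul₀ h2n y
    have hcomm : ∀ v : V, wstar (w (Γi v)) = Γi (wstar (w v)) := by
      intro v
      have := LinearMap.congr_fun hΓicomm v
      simp only [LinearMap.comp_apply, LinearEquiv.coe_coe] at this
      exact this.symm
    have key : ∀ u : V', wstar.symm (Γi (wstar u)) = w (Γi (w.symm u)) := by
      intro u
      have h := hcomm (w.symm u)
      rw [w.apply_symm_apply] at h
      rw [← h, wstar.symm_apply_apply]
    apply LinearMap.ext; intro v'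
    apply cancel
    have hY := LinearMap.congr_fun hdαY v'
    have hX1 := LinearMap.congr_fun hdαX v'
    have hX2 := LinearMap.congr_fun hdαX (w (Γi (w.symm v')))
    simp only [LinearMap.add_apply, LinearMap.sub_apply, LinearMap.comp_apply,
      LinearEquiv.coe_coe] at hY hX1 hX2 ⊢
    rw [hY]
    have e1 : w (Γi (w.symm (dαX v'))) + w (Γi (w.symm (dαX v')))
        = w (Γi (w.symm (dαX v' + dαX v'))) := by
      simp only [map_add]
    rw [show ∀ a b c d : V', (a - b) + (c - d) = (a + c) - (b + d) by intros; abel]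
    rw [e1, hX1, hX2]
    have e2 : w (Γi (w.symm (w (X (w.symm v')) - wstar.symm (Xstar (wstar v')))))
        = w (Γi (X (w.symm v'))) - wstar.symm (Γi (Xstar (wstar v'))) := by
      rw [map_sub, map_sub, map_sub, w.symm_apply_apply]
      congr 1
      rw [← key, wstar.apply_symm_apply]
    rw [e2, w.symm_apply_apply, hcomm, w.apply_symm_apply]
    simp only [map_sub]
    abel
end

section
/- Assume ⟨·,·⟩_V and ⟨·,·⟩_{V'} are nondegenerate and that V and V' are finite-dimensional over the division ring D. Suppose V = V_b ⊕ V_a is a direct sum of D-submodules with ⟨V_b, V_a⟩_V = 0. Let w : V → V' be a D-linear map admitting an adjoint w^⋆, and suppose w^⋆∘w maps V_b into V_b and restricts to a bijection of V_b. Then: (i) the restriction of w to V_b is injective, so w maps V_b isomorphically onto V'_b := w(V_b); (ii) the restriction of ⟨·,·⟩_{V'} to V'_b is nondegenerate, and V' = V'_b ⊕ V'_a, where V'_a := {v' ∈ V' : ⟨v', u⟩_{V'} = 0 for all u ∈ V'_b} is the orthogonal complement of V'_b; (iii) w(V_a) ⊆ V'_a. -/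
theorem stmt8
    (D : Type*) [DivisionRing D]
    (τ : D → D)
    (hτadd : ∀ a b, τ (a + b) = τ a + τ b)
    (hτmul : ∀ a b, τ (a * b) = τ b * τ a)
    (hτinv : ∀ a, τ (τ a) = a)
    (ε : D) (hε : ε = 1 ∨ ε = -1)
    (V V' : Type*) [AddCommGroup V] [AddCommGroup V']
    [Module Dᵐᵒᵖ V] [Module Dᵐᵒᵖ V']
    [FiniteDimensional Dᵐᵒᵖ V] [FiniteDimensional Dᵐᵒᵖ V']
    (innV : V → V → D) (innV' : V' → V' → D)
    (hV : IsHermitianForm τ ε innV)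
    (hV' : IsHermitianForm τ (-ε) innV')
    (hndV : ∀ v : V, (∀ u : V, innV v u = 0) → v = 0)
    (hndV' : ∀ v' : V', (∀ u' : V', innV' v' u' = 0) → v' = 0)
    -- `V = Vb ⊕ Va` with `⟨Vb, Va⟩ = 0`
    (Vb Va : Submodule Dᵐᵒᵖ V)
    (hcompl : IsCompl Vb Va)
    (horth : ∀ v ∈ Vb, ∀ u ∈ Va, innV v u = 0)
    (w : V →ₗ[Dᵐᵒᵖ] V') (wstar : V' →ₗ[Dᵐᵒᵖ] V)
    (hadj : ∀ (v : V) (v' : V'), innV' (w v) v' = innV v (wstar v'))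
    -- `wstar ∘ w` maps `Vb` into `Vb` and restricts to a bijection of `Vb`
    (hbij : Set.BijOn (⇑(wstar ∘ₗ w)) (Vb : Set V) (Vb : Set V)) :
    -- (i) `w` is injective on `Vb`
    Set.InjOn (⇑w) (Vb : Set V) ∧
    -- (ii) the form `innV'` restricted to `V'b := w(Vb)` is nondegenerate …
    (∀ v' ∈ Submodule.map w Vb,
        (∀ u ∈ Submodule.map w Vb, innV' v' u = 0) → v' = 0) ∧
    -- … and `V' = V'b ⊕ V'a` with `V'a` the orthogonal complement of `V'b`
    (∀ x : V', ∃! p : V' × V',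
        p.1 ∈ Submodule.map w Vb ∧
        (∀ u ∈ Submodule.map w Vb, innV' p.2 u = 0) ∧
        x = p.1 + p.2) ∧
    -- (iii) `w(Va) ⊆ V'a`
    (∀ v ∈ Va, ∀ u ∈ Submodule.map w Vb, innV' (w v) u = 0) := by
  obtain ⟨hVa1, hVa2, hVs1, hVs2, hVsym⟩ := hV
  obtain ⟨hV'a1, hV'a2, hV's1, hV's2, hV'sym⟩ := hV'
  have hτ0 : τ 0 = 0 := by
    have h := hτadd 0 0
    rw [add_zero] at h
    exact (left_eq_add.mp h)
  -- basic linearity consequences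
  have innV'_zl : ∀ u, innV' (0 : V') u = 0 := by
    intro u
    have h := hV'a1 0 0 u
    rw [add_zero] at h
    exact (left_eq_add.mp h)
  have innV'_sub_left : ∀ a b u, innV' (a - b) u = innV' a u - innV' b u := by
    intro a b u
    have h := hV'a1 (a - b) b u
    rw [sub_add_cancel] at h
    exact eq_sub_of_add_eq h.symm
  have innV_sub_right : ∀ v a b, innV v (a - b) = innV v a - innV v b := by
    intro v a b
    have h := hVa2 v (a - b) b
    rw [sub_add_cancel] at h
    exact eq_sub_of_add_eq h.symm
  have symm0 : ∀ v' u' : V', innV' v' u' = 0 → innV' u' v' = 0 := by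
    intro v' u' h
    rw [hV'sym v' u', h, hτ0, mul_zero]
  have hdecomp : ∀ u : V, ∃ b ∈ Vb, ∃ a ∈ Va, b + a = u := by
    intro u
    have hu : u ∈ Vb ⊔ Va := by rw [hcompl.codisjoint.eq_top]; trivial
    obtain ⟨b, hb, a, ha, h⟩ := Submodule.mem_sup.1 hu
    exact ⟨b, hb, a, ha, h⟩
  -- (i)
  have h1 : Set.InjOn (⇑w) (Vb : Set V) := by
    intro v₁ h₁ v₂ h₂ heq
    apply hbij.injOn h₁ h₂
    simp only [LinearMap.comp_apply, heq]
  -- (ii) nondegeneracy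
  have h2 : ∀ v' ∈ Submodule.map w Vb,
      (∀ u ∈ Submodule.map w Vb, innV' v' u = 0) → v' = 0 := by
    rintro v' ⟨v, hv, rfl⟩ h
    have hv0 : v = 0 := by
      apply hndV
      intro u
      obtain ⟨b, hb, a, ha, rfl⟩ := hdecomp u
      rw [hVa2, horth v hv a ha, add_zero]
      obtain ⟨c, hc, hcb⟩ := hbij.surjOn hb
      have : innV v (wstar (w c)) = 0 := by
        rw [← hadj]
        exact h (w c) ⟨c, hc, rfl⟩
      rw [show b = wstar (w c) from hcb.symm]
      exact this
    rw [hv0, map_zero]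
  -- (iii)
  have h4 : ∀ v ∈ Va, ∀ u ∈ Submodule.map w Vb, innV' (w v) u = 0 := by
    rintro v hv u ⟨b, hb, rfl⟩
    rw [hadj]
    have hwb : wstar (w b) ∈ Vb := hbij.mapsTo hb
    rw [hVsym (wstar (w b)) v, horth _ hwb v hv, hτ0, mul_zero]
  -- decomposition
  have h3 : ∀ x : V', ∃! p : V' × V',
      p.1 ∈ Submodule.map w Vb ∧
      (∀ u ∈ Submodule.map w Vb, innV' p.2 u = 0) ∧
      x = p.1 + p.2 := by
    intro x
    obtain ⟨sb, hsb, sa, hsa, hsum⟩ := hdecomp (wstar x)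
    obtain ⟨b, hb, hbs⟩ := hbij.surjOn hsb
    have hperp : ∀ u ∈ Submodule.map w Vb, innV' (x - w b) u = 0 := by
      rintro u ⟨c, hc, rfl⟩
      apply symm0
      rw [hadj, map_sub, innV_sub_right]
      have h1' : wstar (w b) = sb := hbs
      have h2' : innV c (wstar x) = innV c sb + innV c sa := by
        rw [← hVa2, hsum]
      rw [h1', h2', horth c hc sa hsa, add_zero, sub_self]
    refine ⟨(w b, x - w b), ⟨⟨b, hb, rfl⟩, hperp, by simp⟩, ?_⟩
    rintro ⟨q1, q2⟩ ⟨hq1, hq2, hq3⟩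
    have hd : q1 - w b ∈ Submodule.map w Vb :=
      Submodule.sub_mem _ hq1 ⟨b, hb, rfl⟩
    have hd0 : q1 - w b = 0 := by
      apply h2 _ hd
      intro u hu
      have e1 : q1 - w b = (x - w b) - q2 := by
        rw [hq3]; abel
      rw [e1, innV'_sub_left, hperp u hu, hq2 u hu, sub_zero]
    have e1 : q1 = w b := by rwa [sub_eq_zero] at hd0
    have e2 : q2 = x - w b := by rw [hq3, e1]; abel
    simp [e1, e2]
  exact ⟨h1, h2, h3, h4⟩
end

section
/- Let w : V → V' be a D-linear map admitting an adjoint w^⋆. If T ∈ End_D(V') admits an adjoint T^* with respect to ⟨·,·⟩_{V'}, then ⟨(w^⋆∘T∘w) v₁, v₂⟩_V = −⟨v₁, (w^⋆∘T^*∘w) v₂⟩_V for all v₁, v₂ ∈ V; that is, −w^⋆∘T^*∘w is an adjoint of w^⋆∘T∘w with respect to ⟨·,·⟩_V. In particular, if T is self-adjoint then w^⋆∘T∘w is skew-adjoint, and if T is skew-adjoint then w^⋆∘T∘w is self-adjoint. -/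
theorem stmt9
    (D : Type*) [DivisionRing D]
    (τ : D → D)
    (hτadd : ∀ a b, τ (a + b) = τ a + τ b)
    (hτmul : ∀ a b, τ (a * b) = τ b * τ a)
    (hτinv : ∀ a, τ (τ a) = a)
    (ε : D) (hε : ε = 1 ∨ ε = -1)
    (V V' : Type*) [AddCommGroup V] [AddCommGroup V']
    [Module Dᵐᵒᵖ V] [Module Dᵐᵒᵖ V']
    (innV : V → V → D) (innV' : V' → V' → D)
    (hV : IsHermitianForm τ ε innV)
    (hV' : IsHermitianForm τ (-ε) innV')
    (w : V →ₗ[Dᵐᵒᵖ] V') (wstar : V' →ₗ[Dᵐᵒᵖ] V)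
    (hadj : ∀ (v : V) (v' : V'), innV' (w v) v' = innV v (wstar v'))
    (T Tstar : V' →ₗ[Dᵐᵒᵖ] V')
    (hT : ∀ (u u' : V'), innV' (T u) u' = innV' u (Tstar u')) :
    -- `−wstar∘Tstar∘w` is an adjoint of `wstar∘T∘w`
    (∀ (v₁ v₂ : V),
        innV ((wstar ∘ₗ T ∘ₗ w) v₁) v₂ = - innV v₁ ((wstar ∘ₗ Tstar ∘ₗ w) v₂)) ∧
    -- if `T` is self-adjoint then `wstar∘T∘w` is skew-adjoint
    ((∀ (u u' : V'), innV' (T u) u' = innV' u (T u')) →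
      ∀ (v₁ v₂ : V),
        innV ((wstar ∘ₗ T ∘ₗ w) v₁) v₂ = - innV v₁ ((wstar ∘ₗ T ∘ₗ w) v₂)) ∧
    -- if `T` is skew-adjoint then `wstar∘T∘w` is self-adjoint
    ((∀ (u u' : V'), innV' (T u) u' = - innV' u (T u')) →
      ∀ (v₁ v₂ : V),
        innV ((wstar ∘ₗ T ∘ₗ w) v₁) v₂ = innV v₁ ((wstar ∘ₗ T ∘ₗ w) v₂)) := by
  obtain ⟨hV1, hV2, hV3, hV4, hV5⟩ := hV
  obtain ⟨hV'1, hV'2, hV'3, hV'4, hV'5⟩ := hV'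
  have hτ0 : τ 0 = 0 := by
    have h : τ 0 + τ 0 = τ 0 + 0 := by rw [← hτadd]; simp
    exact (add_left_cancel h)
  have hτneg : ∀ a, τ (-a) = - τ a := by
    intro a
    have h : τ a + τ (-a) = 0 := by rw [← hτadd]; simp [hτ0]
    exact eq_neg_of_add_eq_zero_right h
  have hτ1 : τ 1 = 1 := by
    have h : τ 1 = τ 1 * τ 1 := by
      have := hτmul 1 1; simpa using this
    have hne : τ 1 ≠ 0 := by
      intro h0
      have := hτinv 1
      rw [h0, hτ0] at this
      exact one_ne_zero this.symm
    exact (mul_left_cancel₀ hne (show τ 1 * 1 = τ 1 * τ 1 by rw [mul_one, ← h])).symm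
  have hτε : τ ε = ε := by rcases hε with h | h <;> simp [h, hτ1, hτneg]
  have hinnV_neg : ∀ (v u : V), innV v (-u) = - innV v u := by
    intro v u
    have h0 : innV v 0 = 0 := by
      have h : innV v 0 + innV v 0 = innV v 0 + 0 := by rw [← hV2]; simp
      exact add_left_cancel h
    have h : innV v u + innV v (-u) = 0 := by rw [← hV2]; simp [h0]
    exact eq_neg_of_add_eq_zero_right h
  have key : ∀ (S : V' →ₗ[Dᵐᵒᵖ] V'),
      (∀ (u u' : V'), innV' (T u) u' = innV' u (S u')) →
      ∀ (v₁ v₂ : V),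
        innV ((wstar ∘ₗ T ∘ₗ w) v₁) v₂ = - innV v₁ ((wstar ∘ₗ S ∘ₗ w) v₂) := by
    intro S hS v₁ v₂
    simp only [LinearMap.comp_apply]
    set R := innV v₁ (wstar (S (w v₂))) with hR
    calc innV (wstar (T (w v₁))) v₂
        = ε * τ (innV v₂ (wstar (T (w v₁)))) := hV5 v₂ _
      _ = ε * τ (innV' (w v₂) (T (w v₁))) := by rw [hadj]
      _ = ε * τ ((-ε) * τ (innV' (T (w v₁)) (w v₂))) := by rw [hV'5 (T (w v₁)) (w v₂)]
      _ = ε * (τ (τ (innV' (T (w v₁)) (w v₂))) * τ (-ε)) := by rw [hτmul]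
      _ = ε * (innV' (T (w v₁)) (w v₂) * (-ε)) := by rw [hτinv, hτneg, hτε]
      _ = ε * (R * (-ε)) := by rw [hS, hadj]
      _ = - R := by rcases hε with h | h <;> simp [h]
  refine ⟨key Tstar hT, fun h => key T h, ?_⟩
  intro h v₁ v₂
  have hS : ∀ (u u' : V'), innV' (T u) u' = innV' u ((-T) u') := by
    intro u u'
    have h0 : innV' u 0 = 0 := by
      have hh : innV' u 0 + innV' u 0 = innV' u 0 + 0 := by rw [← hV'2]; simp
      exact add_left_cancel hh
    have hh : innV' u (T u') + innV' u (-(T u')) = 0 := by rw [← hV'2]; simp [h0]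
    rw [h u u', LinearMap.neg_apply]
    exact (eq_neg_of_add_eq_zero_right hh).symm
  have := key (-T) hS v₁ v₂
  simp only [LinearMap.comp_apply, LinearMap.neg_apply, map_neg, hinnV_neg] at this ⊢
  rw [this, neg_neg]
end

section
/- Let F be a field, V a finite-dimensional F-vector space, and Γ ∈ End_F(V) an endomorphism whose minimal polynomial is squarefree. Then an endomorphism S ∈ End_F(V) commutes with every endomorphism of V that commutes with Γ if and only if S = p(Γ) for some polynomial p ∈ F[X]. Equivalently, the center of the centralizer of Γ in the F-algebra End_F(V) equals the F-subalgebra generated by Γ. -/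
open Polynomial UniqueFactorizationMonoid

lemma exists_vec_ann_eq_minpoly
    (F : Type*) [Field F]
    (V : Type*) [AddCommGroup V] [Module F V] [FiniteDimensional F V]
    (Γ : Module.End F V) (hsf : Squarefree (minpoly F Γ)) :
    ∃ v : V, ∀ q : Polynomial F, Polynomial.aeval Γ q v = 0 → minpoly F Γ ∣ q := by
  classical
  set m := minpoly F Γ with hm
  have hm0 : m ≠ 0 := minpoly.ne_zero_of_finite F Γ
  set fs := normalizedFactors m with hfs
  have hnd : fs.Nodup := (squarefree_iff_nodup_normalizedFactors hm0).mp hsf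
  have key : ∀ p ∈ fs, ∃ z : V, Polynomial.aeval Γ p z = 0 ∧
      (∀ q : Polynomial F, Polynomial.aeval Γ q z = 0 → p ∣ q) := by
    intro p hp
    have hprime : Prime p := prime_of_normalized_factor p hp
    obtain ⟨c, hc⟩ : p ∣ m := dvd_of_mem_normalizedFactors hp
    have hc0 : c ≠ 0 := fun h => hm0 (by simp [hc, h])
    have hdeg : c.natDegree < m.natDegree := by
      have hpdeg : 0 < p.natDegree := hprime.irreducible.natDegree_pos
      rw [hc, Polynomial.natDegree_mul (hprime.ne_zero) hc0]
      omega
    have hcne : Polynomial.aeval Γ c ≠ 0 := by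
      intro h
      have hdvd : m ∣ c := hm ▸ minpoly.dvd F Γ h
      have := Polynomial.natDegree_le_of_dvd hdvd hc0
      omega
    obtain ⟨x, hx⟩ : ∃ x : V, Polynomial.aeval Γ c x ≠ 0 := by
      by_contra h
      push_neg at h
      exact hcne (LinearMap.ext h)
    have hpz : Polynomial.aeval Γ p (Polynomial.aeval Γ c x) = 0 := by
      have h1 : Polynomial.aeval Γ (p * c) x = 0 := by
        rw [← hc]; rw [hm] at *; rw [minpoly.aeval]; rfl
      rw [map_mul] at h1
      exact h1
    refine ⟨Polynomial.aeval Γ c x, hpz, ?_⟩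
    intro q hq
    by_contra hndvd
    obtain ⟨a, b, hab⟩ := hprime.irreducible.coprime_iff_not_dvd.mpr hndvd
    have h2 : Polynomial.aeval Γ (a * p + b * q) (Polynomial.aeval Γ c x) =
        Polynomial.aeval Γ c x := by rw [hab]; simp
    rw [map_add, map_mul, map_mul] at h2
    simp only [LinearMap.add_apply, Module.End.mul_apply, hpz, hq, map_zero, add_zero] at h2
    exact hx (by rw [← h2])
  choose z hz1 hz2 using key
  set t := fs.toFinset with ht
  have htf : ∀ p ∈ t, p ∈ fs := fun p hp => Multiset.mem_toFinset.mp hp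
  set v := ∑ p ∈ t.attach, z p.1 (htf p.1 p.2) with hv
  refine ⟨v, ?_⟩
  intro q hq
  have hdistinct : ∀ r ∈ fs, ∀ p ∈ fs, r ≠ p → ¬ r ∣ p := by
    intro r hr p hp hrp hdvd
    have hrprime : Prime r := prime_of_normalized_factor r hr
    have hpprime : Prime p := prime_of_normalized_factor p hp
    have hassoc : Associated r p := hrprime.associated_of_dvd hpprime hdvd
    exact hrp (by
      rw [← normalize_normalized_factor r hr, ← normalize_normalized_factor p hp]
      exact normalize_eq_normalize hassoc.dvd hassoc.symm.dvd)
  have hpq : ∀ p ∈ fs, p ∣ q := by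
    intro p hp
    obtain ⟨c, hc⟩ : p ∣ m := dvd_of_mem_normalizedFactors hp
    have hprime : Prime p := prime_of_normalized_factor p hp
    have hsum : (0 : V) = ∑ r ∈ t.attach, Polynomial.aeval Γ (c * q) (z r.1 (htf r.1 r.2)) := by
      have h3 : Polynomial.aeval Γ (c * q) v =
          Polynomial.aeval Γ c (Polynomial.aeval Γ q v) := by rw [map_mul]; rfl
      rw [← map_sum, ← hv, h3, hq, map_zero]
    have hterm : ∀ r ∈ t.attach, r.1 ≠ p →
        Polynomial.aeval Γ (c * q) (z r.1 (htf r.1 r.2)) = 0 := by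
      intro r _ hrp
      have hrfs : r.1 ∈ fs := htf r.1 r.2
      have hrprime : Prime r.1 := prime_of_normalized_factor r.1 hrfs
      have hrc : r.1 ∣ c := by
        have hrm : r.1 ∣ m := dvd_of_mem_normalizedFactors hrfs
        rcases hrprime.dvd_or_dvd (hc ▸ hrm) with h | h
        · exact absurd h (hdistinct r.1 hrfs p hp hrp)
        · exact h
      obtain ⟨d, hd⟩ := hrc
      have heq : c * q = (d * q) * r.1 := by rw [hd]; ring
      rw [heq, map_mul, Module.End.mul_apply, hz1 r.1 hrfs, map_zero]
    have hpinfs : (⟨p, Multiset.mem_toFinset.mpr hp⟩ : {x // x ∈ t}) ∈ t.attach :=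
      Finset.mem_attach _ _
    have hone : Polynomial.aeval Γ (c * q) (z p hp) = 0 := by
      have := Finset.sum_eq_single_of_mem (⟨p, Multiset.mem_toFinset.mpr hp⟩ : {x // x ∈ t})
        hpinfs (f := fun r => Polynomial.aeval Γ (c * q) (z r.1 (htf r.1 r.2)))
        (fun r _ hne => hterm r (Finset.mem_attach _ _) (by
          intro h; exact hne (Subtype.ext h)))
      rw [this] at hsum
      exact hsum.symm
    have hpcq : p ∣ c * q := hz2 p hp _ hone
    rcases hprime.dvd_or_dvd hpcq with h | h
    · exfalso
      apply hprime.not_unit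
      apply hsf p
      obtain ⟨e, he⟩ := h
      exact ⟨e, by rw [hc, he]; ring⟩
    · exact h
  -- combine: product of all normalized factors divides q, and m is associated to it
  have hprod : (∏ p ∈ t, p) ∣ q := by
    apply Finset.prod_dvd_of_coprime (s := id)
    · intro a ha b hb hab
      have hafs : a ∈ fs := Multiset.mem_toFinset.mp ha
      have hbfs : b ∈ fs := Multiset.mem_toFinset.mp hb
      exact (prime_of_normalized_factor a hafs).irreducible.coprime_iff_not_dvd.mpr
        (hdistinct a hafs b hbfs hab)
    · intro p hp
      exact hpq p (Multiset.mem_toFinset.mp hp)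
  have hmprod : Associated (∏ p ∈ t, p) m := by
    have h1 : (∏ p ∈ t, p) = fs.prod := by
      rw [ht, Finset.prod_eq_multiset_prod, Multiset.toFinset_val,
        Multiset.dedup_eq_self.mpr hnd, Multiset.map_id']
    rw [h1]
    exact prod_normalizedFactors hm0
  exact (hmprod.symm.dvd).trans hprod

theorem stmt14
    (F : Type*) [Field F]
    (V : Type*) [AddCommGroup V] [Module F V] [FiniteDimensional F V]
    (Γ : Module.End F V) (hsf : Squarefree (minpoly F Γ)) :
    ∀ S : Module.End F V,
      (∀ T : Module.End F V, T * Γ = Γ * T → S * T = T * S) ↔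
        ∃ p : Polynomial F, S = Polynomial.aeval Γ p := by
  classical
  intro S
  constructor
  · intro hS
    obtain ⟨v, hv⟩ := exists_vec_ann_eq_minpoly F V Γ hsf
    have hss : Γ.IsSemisimple :=
      Module.End.isSemisimple_of_squarefree_aeval_eq_zero hsf (minpoly.aeval F Γ)
    -- the orbit map
    set φ : Polynomial F →ₗ[F] V :=
      { toFun := fun q => Polynomial.aeval Γ q v
        map_add' := fun a b => by simp [map_add]
        map_smul' := fun a b => by simp } with hφ
    set U : Submodule F V := LinearMap.range φ with hUdef
    have hΓφ : ∀ r : Polynomial F, Γ (φ r) = φ (Polynomial.X * r) := by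
      intro r
      show Γ (Polynomial.aeval Γ r v) = Polynomial.aeval Γ (Polynomial.X * r) v
      rw [map_mul, Polynomial.aeval_X, Module.End.mul_apply]
    have hU : U ∈ Γ.invtSubmodule := by
      rw [Module.End.mem_invtSubmodule]
      rintro x ⟨r, rfl⟩
      exact ⟨Polynomial.X * r, (hΓφ r).symm⟩
    obtain ⟨W, hW, hcompl⟩ := Module.End.isSemisimple_iff.mp hss U hU
    rw [Module.End.mem_invtSubmodule] at hU hW
    set proj := Submodule.projectionOnto U W hcompl with hproj
    set πe : Module.End F V := U.subtype ∘ₗ proj with hπe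
    have hπ_left : ∀ u (hu : u ∈ U), πe u = u := fun u hu => by
      simp [hπe, hproj, Submodule.projectionOnto_apply_of_mem_left hcompl hu]
    have hπ_right : ∀ w (hw : w ∈ W), πe w = 0 := fun w hw => by
      simp [hπe, hproj, Submodule.projectionOnto_apply_of_mem_right hcompl hw]
    have hcomm : πe * Γ = Γ * πe := by
      ext x
      obtain ⟨u, w, hu, hw, rfl⟩ := Submodule.codisjoint_iff_exists_add_eq.mp hcompl.codisjoint x
      have hu' : Γ u ∈ U := hU hu
      have hw' : Γ w ∈ W := hW hw
      simp only [Module.End.mul_apply, map_add]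
      rw [hπ_left _ hu', hπ_right _ hw', hπ_left _ hu, hπ_right _ hw]
      simp
    have hv_inU : v ∈ U := ⟨1, by show Polynomial.aeval Γ 1 v = v; simp⟩
    have hST := hS πe hcomm
    have hSv_inU : S v ∈ U := by
      have h1 : S v = πe (S v) := by
        conv_lhs => rw [← hπ_left v hv_inU]
        have := congrFun (congrArg DFunLike.coe hST) v
        simpa [Module.End.mul_apply] using this
      rw [h1]
      exact (proj (S v)).2
    obtain ⟨q, hq⟩ := hSv_inU
    refine ⟨q, LinearMap.ext fun w => ?_⟩
    -- the transporter T with T v = w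
    set ψ : Polynomial F →ₗ[F] V :=
      { toFun := fun r => Polynomial.aeval Γ r w
        map_add' := fun a b => by simp [map_add]
        map_smul' := fun a b => by simp } with hψ
    have hΓψ : ∀ r : Polynomial F, Γ (ψ r) = ψ (Polynomial.X * r) := by
      intro r
      show Γ (Polynomial.aeval Γ r w) = Polynomial.aeval Γ (Polynomial.X * r) w
      rw [map_mul, Polynomial.aeval_X, Module.End.mul_apply]
    have hker : LinearMap.ker φ ≤ LinearMap.ker ψ := by
      intro r hr
      rw [LinearMap.mem_ker] at hr ⊢
      obtain ⟨c, hc⟩ := hv r hr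
      show Polynomial.aeval Γ r w = 0
      rw [hc, map_mul, minpoly.aeval, zero_mul, LinearMap.zero_apply]
    set T0 : U →ₗ[F] V :=
      ((LinearMap.ker φ).liftQ ψ hker) ∘ₗ (φ.quotKerEquivRange).symm.toLinearMap with hT0def
    have hT0 : ∀ r : Polynomial F, T0 ⟨φ r, ⟨r, rfl⟩⟩ = ψ r := by
      intro r
      rw [hT0def]
      show ((LinearMap.ker φ).liftQ ψ hker) (φ.quotKerEquivRange.symm ⟨φ r, ⟨r, rfl⟩⟩) = ψ r
      rw [LinearMap.quotKerEquivRange_symm_apply_image φ r ⟨r, rfl⟩]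
      rfl
    set T : Module.End F V := T0 ∘ₗ proj with hTdef
    have hTφ : ∀ r : Polynomial F, T (φ r) = ψ r := by
      intro r
      have hmem : φ r ∈ U := ⟨r, rfl⟩
      rw [hTdef]
      show T0 (proj (φ r)) = ψ r
      rw [hproj]
      rw [show proj (φ r) = ⟨φ r, hmem⟩ from
        Submodule.projectionOnto_apply_left hcompl ⟨φ r, hmem⟩]
      exact hT0 r
    have hTW : ∀ w' ∈ W, T w' = 0 := by
      intro w' hw'
      show T0 (proj w') = 0
      rw [hproj, Submodule.projectionOnto_apply_of_mem_right hcompl hw', map_zero]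
    have hTcomm : T * Γ = Γ * T := by
      ext x
      obtain ⟨u, w', hu, hw', rfl⟩ := Submodule.codisjoint_iff_exists_add_eq.mp hcompl.codisjoint x
      obtain ⟨r, rfl⟩ := hu
      have hw'' : Γ w' ∈ W := hW hw'
      simp only [Module.End.mul_apply, map_add]
      rw [hΓφ r, hTφ _, hTW _ hw'', hTφ r, hTW _ hw', hΓψ r]
      simp
    have hST2 := hS T hTcomm
    have hTv : T v = w := by
      have h1 : v = φ 1 := by show v = Polynomial.aeval Γ 1 v; simp
      have h2 : ψ 1 = w := by show Polynomial.aeval Γ 1 w = w; simp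
      rw [h1, hTφ 1, h2]
    calc S w = S (T v) := by rw [hTv]
    _ = T (S v) := by
        have := congrFun (congrArg DFunLike.coe hST2) v
        simpa [Module.End.mul_apply] using this
    _ = T (φ q) := by rw [hq]
    _ = ψ q := hTφ q
    _ = Polynomial.aeval Γ q w := rfl
  · rintro ⟨p, rfl⟩ T hT
    have hc : Commute T Γ := hT
    induction p using Polynomial.induction_on' with
    | add f g hf hg => rw [map_add, add_mul, mul_add, hf, hg]
    | monomial n a =>
      rw [Polynomial.aeval_monomial]
      have h2 : Commute T (Γ ^ n) := hc.pow_right n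
      have h3 : Commute T (algebraMap F (Module.End F V) a) := (Algebra.commutes a T).symm
      exact ((h3.mul_right h2).symm).eq
end

section
/- Let H be a finite group, J a normal subgroup of H, and J₁ a subgroup with J ≤ J₁ ≤ H. Let τ be a finite-dimensional complex representation of J₁ and χ a finite-dimensional irreducible complex representation of J. Assume that H stabilizes χ, i.e. for every h ∈ H the representation j ↦ χ(h j h⁻¹) of J is isomorphic to χ. Realize the induced representation Ind_{J₁}^H τ on the space {f : H → τ : f(j₁ h) = τ(j₁) f(h) for all j₁ ∈ J₁, h ∈ H}, with H acting by right translation. Then the χ-isotypic component τ[χ] of τ|_J is a J₁-subrepresentation of τ, and the χ-isotypic component of (Ind_{J₁}^H τ)|_J equals {f ∈ Ind_{J₁}^H τ : f(h) ∈ τ[χ] for all h ∈ H}, which is the induced representation Ind_{J₁}^H (τ[χ]). -/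
theorem stmt15
    (H : Type*) [Group H] [Fintype H]
    (J J₁ : Subgroup H) (hJn : J.Normal) (hle : J ≤ J₁)
    (Wτ : Type*) [AddCommGroup Wτ] [Module ℂ Wτ] [FiniteDimensional ℂ Wτ]
    (Wχ : Type*) [AddCommGroup Wχ] [Module ℂ Wχ] [FiniteDimensional ℂ Wχ]
    (τ : Representation ℂ J₁ Wτ) (χ : Representation ℂ J Wχ)
    -- `χ` is irreducible
    (hχ_ne : Nontrivial Wχ)
    (hχ_irr : ∀ U : Submodule ℂ Wχ,
      (∀ (j : J) (x : Wχ), x ∈ U → χ j x ∈ U) → U = ⊥ ∨ U = ⊤)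
    -- `H` stabilizes `χ`: for every `h ∈ H`, `j ↦ χ(h j h⁻¹)` is isomorphic to `χ`
    (hstab : ∀ h : H, ∃ φ : Wχ ≃ₗ[ℂ] Wχ,
      ∀ (j : J) (x : Wχ),
        φ (χ j x) = χ ⟨h * ↑j * h⁻¹, hJn.conj_mem ↑j j.2 h⟩ (φ x)) :
    -- (1) the `χ`-isotypic component `τ[χ]` of `τ|_J` (the span of the images of all
    --     injective `J`-equivariant maps `Wχ → Wτ`) is a `J₁`-subrepresentation of `τ`
    (∀ (j₁ : J₁) (x : Wτ),
      x ∈ Submodule.span ℂ {y : Wτ | ∃ e : Wχ →ₗ[ℂ] Wτ, Function.Injective e ∧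
            (∀ (j : J) (z : Wχ), e (χ j z) = τ ⟨↑j, hle j.2⟩ (e z)) ∧ y ∈ Set.range e} →
      τ j₁ x ∈ Submodule.span ℂ {y : Wτ | ∃ e : Wχ →ₗ[ℂ] Wτ, Function.Injective e ∧
            (∀ (j : J) (z : Wχ), e (χ j z) = τ ⟨↑j, hle j.2⟩ (e z)) ∧ y ∈ Set.range e}) ∧
    -- (2) in the induced representation `Ind_{J₁}^H τ`, realized on the space of functions
    --     `f : H → Wτ` with `f (j₁ * h) = τ j₁ (f h)` and `H` acting by right translation,
    --     the `χ`-isotypic component of the restriction to `J` equals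
    --     `{f ∈ Ind : f(h) ∈ τ[χ] for all h}`, i.e. `Ind_{J₁}^H (τ[χ])`
    ((Submodule.span ℂ {f : H → Wτ | ∃ e : Wχ →ₗ[ℂ] (H → Wτ), Function.Injective e ∧
          (∀ (z : Wχ) (j₁ : J₁) (h : H), e z (↑j₁ * h) = τ j₁ (e z h)) ∧
          (∀ (j : J) (z : Wχ), e (χ j z) = fun h => e z (h * ↑j)) ∧
          f ∈ Set.range e} : Set (H → Wτ))
      = {f : H → Wτ | (∀ (j₁ : J₁) (h : H), f (↑j₁ * h) = τ j₁ (f h)) ∧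
          ∀ h : H, f h ∈ Submodule.span ℂ
            {y : Wτ | ∃ e : Wχ →ₗ[ℂ] Wτ, Function.Injective e ∧
              (∀ (j : J) (z : Wχ), e (χ j z) = τ ⟨↑j, hle j.2⟩ (e z)) ∧
              y ∈ Set.range e}}) := by
  classical
  set S : Set Wτ := {y : Wτ | ∃ e : Wχ →ₗ[ℂ] Wτ, Function.Injective e ∧
      (∀ (j : J) (z : Wχ), e (χ j z) = τ ⟨↑j, hle j.2⟩ (e z)) ∧ y ∈ Set.range e} with hSdef
  set S' : Set (H → Wτ) := {f : H → Wτ | ∃ e : Wχ →ₗ[ℂ] (H → Wτ), Function.Injective e ∧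
      (∀ (z : Wχ) (j₁ : J₁) (h : H), e z (↑j₁ * h) = τ j₁ (e z h)) ∧
      (∀ (j : J) (z : Wχ), e (χ j z) = fun h => e z (h * ↑j)) ∧
      f ∈ Set.range e} with hS'def
  have hτinj : ∀ g : J₁, Function.Injective (τ g) := by
    intro g a b hab
    have h2 := congrArg (τ g⁻¹) hab
    simpa [← Module.End.mul_apply, ← map_mul] using h2
  -- Part 1
  have part1 : ∀ (j₁ : J₁) (x : Wτ),
      x ∈ Submodule.span ℂ S → τ j₁ x ∈ Submodule.span ℂ S := by
    intro j₁ x hx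
    have key : Submodule.span ℂ S ≤ (Submodule.span ℂ S).comap (τ j₁) := by
      rw [Submodule.span_le]
      rintro y ⟨e, he_inj, he_eq, z, rfl⟩
      obtain ⟨φ, hφ⟩ := hstab ((↑j₁ : H)⁻¹)
      refine Submodule.mem_comap.mpr (Submodule.subset_span ?_)
      refine ⟨(τ j₁) ∘ₗ e ∘ₗ (φ : Wχ →ₗ[ℂ] Wχ), ?_, ?_, ?_⟩
      · exact (hτinj j₁).comp (he_inj.comp φ.injective)
      · intro j z'
        simp only [LinearMap.comp_apply, LinearEquiv.coe_coe]
        rw [hφ j z', he_eq, ← Module.End.mul_apply, ← map_mul, ← Module.End.mul_apply,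
          ← map_mul]
        congr 2
        ext
        push_cast
        group
      · refine ⟨φ.symm z, ?_⟩
        simp only [LinearMap.comp_apply, LinearEquiv.coe_coe, LinearEquiv.apply_symm_apply]
    exact key hx
  refine ⟨part1, ?_⟩
  -- Part 2
  apply Set.Subset.antisymm
  · -- span S' ⊆ RHS
    have fwd : Submodule.span ℂ S' ≤
        ({ carrier := {f : H → Wτ |
            (∀ (j₁ : J₁) (h : H), f (↑j₁ * h) = τ j₁ (f h)) ∧
            ∀ h : H, f h ∈ Submodule.span ℂ S}
           add_mem' := by
             rintro f g ⟨hf1, hf2⟩ ⟨hg1, hg2⟩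
             exact ⟨fun j₁ h => by simp [hf1, hg1],
               fun h => Submodule.add_mem _ (hf2 h) (hg2 h)⟩
           zero_mem' := ⟨fun _ _ => by simp, fun _ => Submodule.zero_mem _⟩
           smul_mem' := by
             rintro c f ⟨hf1, hf2⟩
             exact ⟨fun j₁ h => by simp [hf1],
               fun h => Submodule.smul_mem _ _ (hf2 h)⟩ } : Submodule ℂ (H → Wτ)) := by
      rw [Submodule.span_le]
      rintro f ⟨e, he_inj, he_equiv, he_J, z, rfl⟩
      refine ⟨fun j₁ h => he_equiv z j₁ h, ?_⟩
      intro h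
      obtain ⟨φ, hφ⟩ := hstab h⁻¹
      set e' : Wχ →ₗ[ℂ] Wτ := (LinearMap.proj h) ∘ₗ e ∘ₗ (φ : Wχ →ₗ[ℂ] Wχ) with he'def
      have he'_apply : ∀ w, e' w = e (φ w) h := fun w => rfl
      have he'_eq : ∀ (j : J) (z' : Wχ), e' (χ j z') = τ ⟨↑j, hle j.2⟩ (e' z') := by
        intro j z'
        rw [he'_apply, hφ j z', he_J]
        show e (φ z') (h * (h⁻¹ * ↑j * (h⁻¹)⁻¹)) = τ ⟨↑j, hle j.2⟩ (e' z')
        have harg : h * (h⁻¹ * ↑j * (h⁻¹)⁻¹) = (↑j : H) * h := by group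
        rw [harg]
        exact he_equiv (φ z') ⟨↑j, hle j.2⟩ h
      have hval : e z h = e' (φ.symm z) := by
        rw [he'_apply, LinearEquiv.apply_symm_apply]
      rcases hχ_irr (LinearMap.ker e') (fun j x hx => by
          rw [LinearMap.mem_ker] at hx ⊢
          rw [he'_eq, hx, map_zero]) with hker | hker
      · have hinj : Function.Injective e' := LinearMap.ker_eq_bot.mp hker
        rw [show (e z) h = e' (φ.symm z) from hval]
        exact Submodule.subset_span ⟨e', hinj, he'_eq, ⟨φ.symm z, rfl⟩⟩
      · have : e' (φ.symm z) = 0 := by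
          have hm : φ.symm z ∈ LinearMap.ker e' := by rw [hker]; trivial
          exact hm
        rw [show (e z) h = e' (φ.symm z) from hval, this]
        exact Submodule.zero_mem _
    intro f hf
    exact fwd hf
  · -- RHS ⊆ span S'
    rintro f ⟨hf1, hf2⟩
    -- the linear maps L h
    have Ldef : ∀ h : H, ∃ L : Wτ →ₗ[ℂ] (H → Wτ),
        ∀ v g, L v g = if hg : g * h⁻¹ ∈ J₁ then τ ⟨g * h⁻¹, hg⟩ v else 0 := by
      intro h
      refine ⟨{ toFun := fun v g => if hg : g * h⁻¹ ∈ J₁ then τ ⟨g * h⁻¹, hg⟩ v else 0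
                map_add' := ?_
                map_smul' := ?_ }, fun v g => rfl⟩
      · intro a b; funext g; by_cases hg : g * h⁻¹ ∈ J₁ <;> simp [hg]
      · intro c a; funext g; by_cases hg : g * h⁻¹ ∈ J₁ <;> simp [hg]
    choose L hL using Ldef
    have claimA : ∀ h : H, L h (f h) ∈ Submodule.span ℂ S' := by
      intro h
      have key : Submodule.span ℂ S ≤ (Submodule.span ℂ S').comap (L h) := by
        rw [Submodule.span_le]
        rintro v ⟨e, he_inj, he_eq, z, rfl⟩
        obtain ⟨φ, hφ⟩ := hstab h
        set E : Wχ →ₗ[ℂ] (H → Wτ) := (L h) ∘ₗ e ∘ₗ (φ : Wχ →ₗ[ℂ] Wχ) with hEdef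
        have hEapp : ∀ w, E w = L h (e (φ w)) := fun w => rfl
        have hLh : ∀ v : Wτ, L h v h = v := by
          intro v
          rw [hL, dif_pos (show h * h⁻¹ ∈ J₁ by simpa using one_mem J₁)]
          have h2 : (⟨h * h⁻¹, by simpa using one_mem J₁⟩ : J₁) = 1 := by ext; simp
          rw [h2, map_one, Module.End.one_apply]
        have hLinj : Function.Injective (L h) := by
          intro a b hab
          have := congrFun hab h
          rwa [hLh, hLh] at this
        refine Submodule.mem_comap.mpr (Submodule.subset_span ⟨E, ?_, ?_, ?_, ?_⟩)
        · exact hLinj.comp (he_inj.comp φ.injective)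
        · intro z' j₁ g
          rw [hEapp, hL, hL]
          by_cases hg : g * h⁻¹ ∈ J₁
          · rw [dif_pos hg, dif_pos (show (↑j₁ : H) * g * h⁻¹ ∈ J₁ by
              rw [mul_assoc]; exact mul_mem j₁.2 hg)]
            rw [← Module.End.mul_apply, ← map_mul]
            congr 2
            ext
            push_cast
            group
          · rw [dif_neg hg, dif_neg ?_, map_zero]
            intro hcon
            apply hg
            have hrw : g * h⁻¹ = (↑j₁ : H)⁻¹ * ((↑j₁ : H) * g * h⁻¹) := by group
            rw [hrw]
            exact mul_mem (inv_mem j₁.2) hcon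
        · intro j z'
          funext g
          rw [hEapp, hEapp, hφ j z', he_eq, hL, hL]
          by_cases hg : g * h⁻¹ ∈ J₁
          · rw [dif_pos hg, dif_pos (show g * ↑j * h⁻¹ ∈ J₁ by
              have : g * ↑j * h⁻¹ = (g * h⁻¹) * (h * ↑j * h⁻¹) := by group
              rw [this]; exact mul_mem hg (hle (hJn.conj_mem ↑j j.2 h)))]
            rw [← Module.End.mul_apply, ← map_mul]
            congr 2
            ext
            push_cast
            group
          · rw [dif_neg hg, dif_neg ?_]
            intro hcon
            apply hg
            have hrw : g * h⁻¹ = (g * ↑j * h⁻¹) * (h * (↑j)⁻¹ * h⁻¹) := by group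
            rw [hrw]
            exact mul_mem hcon (hle (hJn.conj_mem (↑j)⁻¹ (inv_mem j.2) h))
        · refine ⟨φ.symm z, ?_⟩
          rw [hEapp, LinearEquiv.apply_symm_apply]
      exact key (hf2 h)
    have hcard : (Fintype.card J₁ : ℂ) ≠ 0 := by
      exact_mod_cast Fintype.card_ne_zero
    have hsum : f = (Fintype.card J₁ : ℂ)⁻¹ • ∑ h : H, L h (f h) := by
      funext g
      have hterm : ∀ h : H, L h (f h) g = if g * h⁻¹ ∈ J₁ then f g else 0 := by
        intro h
        rw [hL]
        by_cases hg : g * h⁻¹ ∈ J₁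
        · rw [dif_pos hg, if_pos hg]
          have h3 : f (g * h⁻¹ * h) = τ ⟨g * h⁻¹, hg⟩ (f h) := hf1 ⟨g * h⁻¹, hg⟩ h
          rw [inv_mul_cancel_right] at h3
          exact h3.symm
        · rw [dif_neg hg, if_neg hg]
      have hsum2 : (∑ h : H, L h (f h)) g = (Fintype.card J₁) • f g := by
        rw [Finset.sum_apply]
        simp_rw [hterm]
        rw [Finset.sum_ite, Finset.sum_const_zero, add_zero, Finset.sum_const]
        congr 1
        refine Finset.card_bij' (fun h hh => (⟨g * h⁻¹, by simpa using hh⟩ : J₁))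
          (fun j₁ _ => (↑j₁ : H)⁻¹ * g) ?_ ?_ ?_ ?_
        · intro a ha; exact Finset.mem_univ _
        · intro j₁ _
          simp only [Finset.mem_filter, Finset.mem_univ, true_and]
          have : g * ((↑j₁ : H)⁻¹ * g)⁻¹ = ↑j₁ := by group
          rw [this]; exact j₁.2
        · intro a ha
          simp only []
          group
        · intro j₁ _
          ext
          simp only []
          group
      rw [Pi.smul_apply, hsum2, ← Nat.cast_smul_eq_nsmul ℂ, inv_smul_smul₀ hcard]
    rw [hsum]
    exact SetLike.mem_coe.mpr (Submodule.smul_mem _ _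
      (Submodule.sum_mem _ (fun h _ => claimA h)))
end
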